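/- arXiv:2111.03725 — 2 statements merged into one kernel-verified Lean document; each statement's English description precedes it below -/
import Mathlib

section
/- Let (T,bag) be a regular rooted tree decomposition of a finite graph G of adhesion at most a, and suppose G is K_t-topological-minor-free. Then for every node x of T, the bag graph bgraph(x) is K_{t'}-topological-minor-free, where t' = max(t, a+2). -/
/-- A finite rooted tree, encoded by its parent function. -/
structure RTree (ι : Type*) where
  root : ι
  parent : ι → ι
  parent_root : parent root = root
  reaches_root : ∀ x : ι, ∃ n : ℕ, parent^[n] x = root

namespace RTree

variable {ι : Type*} (T : RTree ι)

/-- `T.Anc x y` means `x` is an ancestor of `y` (every node is its own ancestor). -/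
def Anc (x y : ι) : Prop := ∃ n : ℕ, T.parent^[n] y = x

/-- `T.IsChild y x` means `y` is a child of `x`. -/
def IsChild (y x : ι) : Prop := y ≠ T.root ∧ T.parent y = x

/-- The underlying undirected graph of the rooted tree. -/
def treeGraph : SimpleGraph ι where
  Adj x y := x ≠ y ∧ (T.IsChild x y ∨ T.IsChild y x)
  symm := ⟨fun x y h => ⟨h.1.symm, h.2.symm⟩⟩
  loopless := ⟨fun x h => h.1 rfl⟩

end RTree

/-- Two vertices are connected by a walk all of whose vertices lie in `U`. -/
def ConnIn {V : Type*} (G : SimpleGraph V) (U : Set V) (a b : V) : Prop :=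
  ∃ p : G.Walk a b, ∀ w ∈ p.support, w ∈ U

theorem ConnIn.symm {V : Type*} {G : SimpleGraph V} {U : Set V} {a b : V}
    (h : ConnIn G U a b) : ConnIn G U b a := by
  obtain ⟨p, hp⟩ := h
  refine ⟨p.reverse, fun w hw => hp w ?_⟩
  rwa [SimpleGraph.Walk.support_reverse, List.mem_reverse] at hw

/-- `X` is `(q,k)`-unbreakable in the induced subgraph `G[U]`: for every separation `(A,B)`
of `G[U]` of order at most `k`, one of the two sides contains at most `q` vertices of `X`. -/
def UnbreakableIn {V : Type*} (G : SimpleGraph V) (U X : Set V) (q k : ℕ) : Prop :=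
  ∀ A B : Set V, A ⊆ U → B ⊆ U → A ∪ B = U →
    (∀ a ∈ A \ B, ∀ b ∈ B \ A, ¬ G.Adj a b) →
    (A ∩ B).ncard ≤ k →
    (A ∩ X).ncard ≤ q ∨ (B ∩ X).ncard ≤ q

/-- A rooted tree decomposition of the graph `G`, with nodes indexed by `ι`. -/
structure TreeDecomp {V : Type*} (G : SimpleGraph V) (ι : Type*) extends RTree ι where
  bag : ι → Set V
  /-- (T1) for every vertex, the set of nodes whose bag contains it
  is a nonempty subtree of the tree. -/
  bag_subtree : ∀ u : V, ((toRTree.treeGraph).induce {x : ι | u ∈ bag x}).Connected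
  /-- (T2) every edge is contained in some bag. -/
  bag_edge : ∀ u v : V, G.Adj u v → ∃ x : ι, u ∈ bag x ∧ v ∈ bag x

namespace TreeDecomp

variable {V ι : Type*} {G : SimpleGraph V} (D : TreeDecomp G ι)

/-- The adhesion of a node: intersection of its bag with the bag of its parent
(empty at the root). -/
def adh (x : ι) : Set V :=
  {v : V | x ≠ D.root ∧ v ∈ D.bag (D.parent x) ∧ v ∈ D.bag x}

/-- The margin of a node. -/
def mrg (x : ι) : Set V := D.bag x \ D.adh x

/-- The cone at a node: union of the bags at all its descendants. -/
def cone (x : ι) : Set V := {v : V | ∃ y : ι, D.toRTree.Anc x y ∧ v ∈ D.bag y}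

/-- The component at a node. -/
def comp (x : ι) : Set V := D.cone x \ D.adh x

/-- A tree decomposition is regular if every non-root node has nonempty margin,
connected component, and every adhesion vertex has a neighbour in the component. -/
def Regular : Prop :=
  ∀ x : ι, x ≠ D.root →
    (D.mrg x).Nonempty ∧
    (G.induce (D.comp x)).Connected ∧
    ∀ u ∈ D.adh x, ∃ w ∈ D.comp x, G.Adj u w

end TreeDecomp

namespace TreeDecomp

variable {V ι : Type*} {G : SimpleGraph V} (D : TreeDecomp G ι)

/-- The bag graph at a node `x`: its vertices are the elements of `bag(x)` together with
the children of `x`; two bag vertices are adjacent iff they are adjacent in `G`, a bag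
vertex is adjacent to a child `y` iff it has a `G`-neighbour in `comp(y)`, and no two
children are adjacent. -/
def bgraph (x : ι) : SimpleGraph (↥(D.bag x) ⊕ {y : ι // D.toRTree.IsChild y x}) where
  Adj a b :=
    match a, b with
    | Sum.inl u, Sum.inl v => G.Adj u v
    | Sum.inl u, Sum.inr y => ∃ w ∈ D.comp y.1, G.Adj (u : V) w
    | Sum.inr y, Sum.inl u => ∃ w ∈ D.comp y.1, G.Adj (u : V) w
    | Sum.inr _, Sum.inr _ => False
  symm := by
    constructor
    rintro (u | y) (v | z) h
    · exact G.adj_symm h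
    · exact h
    · exact h
    · exact h
  loopless := by
    constructor
    rintro (u | y) h
    · exact G.loopless.irrefl _ h
    · exact h

end TreeDecomp

/-- A topological minor model of `H` in `G`: an injective map `η` on vertices together
with, for each edge of `H`, a path in `G` joining the images of its endpoints, the paths
being pairwise internally vertex-disjoint. -/
def IsTopMinorModel {W V : Type*} (H : SimpleGraph W) (G : SimpleGraph V)
    (η : W → V) (p : ∀ u v : W, H.Adj u v → G.Walk (η u) (η v)) : Prop :=
  Function.Injective η ∧
  (∀ (u v : W) (h : H.Adj u v), (p u v h).IsPath) ∧
  (∀ (u v : W) (h : H.Adj u v) (u' v' : W) (h' : H.Adj u' v'), s(u, v) ≠ s(u', v') →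
      ∀ w : V, w ∈ (p u v h).support → w ∉ (p u' v' h').support.tail.dropLast)

/-- `G` contains no topological minor model of the complete graph `K_t`. -/
def TopMinorFree {V : Type*} (t : ℕ) (G : SimpleGraph V) : Prop :=
  ¬ ∃ (η : Fin t → V) (p : ∀ u v : Fin t, (⊤ : SimpleGraph (Fin t)).Adj u v → G.Walk (η u) (η v)),
      IsTopMinorModel ⊤ G η p

section TreeLemmas

namespace RTree

variable {ι : Type*} (T : RTree ι)

lemma iterate_parent_root (n : ℕ) : T.parent^[n] T.root = T.root := by
  induction n with
  | zero => rfl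
  | succ n ih => rw [Function.iterate_succ_apply, T.parent_root, ih]

lemma eq_root_of_iterate_fixed {y : ι} {n : ℕ} (h : T.parent^[n + 1] y = y) : y = T.root := by
  obtain ⟨m, hm⟩ := T.reaches_root y
  have key : ∀ k : ℕ, T.parent^[k * (n + 1)] y = y := by
    intro k
    induction k with
    | zero => simp
    | succ k ih => rw [Nat.succ_mul, Function.iterate_add_apply, h, ih]
  have h1 : T.parent^[m * (n + 1)] y = y := key m
  have h2 : T.parent^[m * (n + 1)] y = T.root := by
    have : m * (n + 1) = (m * (n + 1) - m) + m := by
      have : m ≤ m * (n + 1) := Nat.le_mul_of_pos_right m (Nat.succ_pos n)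
      omega
    rw [this, Function.iterate_add_apply, hm, iterate_parent_root]
  rw [← h1, h2]

lemma not_anc_parent {y : ι} (hy : y ≠ T.root) : ¬ T.Anc y (T.parent y) := by
  rintro ⟨n, hn⟩
  exact hy (T.eq_root_of_iterate_fixed (n := n) (by
    rw [Function.iterate_succ_apply, hn]))

lemma anc_of_isChild {y a b : ι} (ha : T.Anc y a) (hb : T.IsChild b a) : T.Anc y b := by
  obtain ⟨n, hn⟩ := ha
  exact ⟨n + 1, by rw [Function.iterate_succ_apply, hb.2, hn]⟩

end RTree

end TreeLemmas

section SepLemmas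

open SimpleGraph

variable {V ι : Type*} {G : SimpleGraph V} (D : TreeDecomp G ι)

/-- Key separator lemma: if `w` appears in a bag inside the subtree of `y` and also
in a bag outside it, then `w ∈ adh y`. -/
lemma TreeDecomp.mem_adh_of_sep {y : ι} (hy : y ≠ D.root) {w : V} {z z' : ι}
    (hz : D.toRTree.Anc y z) (hw : w ∈ D.bag z) (hw' : w ∈ D.bag z')
    (hz' : ¬ D.toRTree.Anc y z') : w ∈ D.adh y := by
  have hconn := D.bag_subtree w
  obtain ⟨pw⟩ := hconn.preconnected ⟨z, hw⟩ ⟨z', hw'⟩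
  suffices H : ∀ (s e : {x : ι | w ∈ D.bag x})
      (_ : ((D.toRTree.treeGraph).induce {x : ι | w ∈ D.bag x}).Walk s e),
      D.toRTree.Anc y s.1 → ¬ D.toRTree.Anc y e.1 → w ∈ D.adh y from H _ _ pw hz hz'
  intro s e q
  induction q with
  | nil => exact fun h h' => absurd h h'
  | @cons s b c hadj q ih =>
    intro hs he
    by_cases hb : D.toRTree.Anc y b.1
    · exact ih hb he
    · have h' : D.toRTree.treeGraph.Adj s.1 b.1 := hadj
      rcases h'.2 with hc | hc
      · -- s.1 is a child of b.1 : parent s.1 = b.1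
        obtain ⟨n, hn⟩ := hs
        cases n with
        | zero =>
          simp only [Function.iterate_zero, id_eq] at hn
          refine ⟨hy, ?_, ?_⟩
          · rw [← hn, hc.2]; exact b.2
          · rw [← hn]; exact s.2
        | succ n =>
          exact absurd ⟨n, by rw [Function.iterate_succ_apply, hc.2] at hn; exact hn⟩ hb
      · exact absurd (D.toRTree.anc_of_isChild hs hc) hb

/-- Every bag containing a vertex of `comp y` lies in the subtree of `y`. -/
lemma TreeDecomp.anc_of_mem_comp {y : ι} (hy : y ≠ D.root) {w : V}
    (hw : w ∈ D.comp y) {z : ι} (hz : w ∈ D.bag z) : D.toRTree.Anc y z := by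
  by_contra hz'
  obtain ⟨⟨z₀, hz₀, hwz₀⟩, hnadh⟩ := hw
  exact hnadh (D.mem_adh_of_sep hy hz₀ hwz₀ hz hz')

lemma TreeDecomp.not_mem_bag_parent {y : ι} (hy : y ≠ D.root) {w : V}
    (hw : w ∈ D.comp y) : w ∉ D.bag (D.toRTree.parent y) := fun h =>
  D.toRTree.not_anc_parent hy (D.anc_of_mem_comp hy hw h)

/-- A vertex of `bag x` adjacent to `comp y` (`y` a child of `x`) lies in `adh y`. -/
lemma TreeDecomp.adh_of_adj_comp {x y : ι} (hxy : D.toRTree.IsChild y x) {u w : V}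
    (hu : u ∈ D.bag x) (hw : w ∈ D.comp y) (hadj : G.Adj u w) : u ∈ D.adh y := by
  obtain ⟨z, hz1, hz2⟩ := D.bag_edge u w hadj
  have hz : D.toRTree.Anc y z := D.anc_of_mem_comp hxy.1 hw hz2
  have hx : ¬ D.toRTree.Anc y x := by
    rw [← hxy.2]; exact D.toRTree.not_anc_parent hxy.1
  exact D.mem_adh_of_sep hxy.1 hz hz1 hu hx

lemma TreeDecomp.comp_disjoint_bag {x y : ι} (hxy : D.toRTree.IsChild y x) {w : V}
    (hw : w ∈ D.comp y) (hb : w ∈ D.bag x) : False := by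
  have hx : ¬ D.toRTree.Anc y x := by
    rw [← hxy.2]; exact D.toRTree.not_anc_parent hxy.1
  exact hx (D.anc_of_mem_comp hxy.1 hw hb)

lemma TreeDecomp.comp_disjoint {x y y' : ι} (hxy : D.toRTree.IsChild y x)
    (hxy' : D.toRTree.IsChild y' x) (hne : y ≠ y') {w : V}
    (hw : w ∈ D.comp y) (hw' : w ∈ D.comp y') : False := by
  obtain ⟨⟨z, ⟨n, hn⟩, hwz⟩, -⟩ := hw
  obtain ⟨m, hm⟩ := D.anc_of_mem_comp hxy'.1 hw' hwz
  -- parent^[n] z = y, parent^[m] z = y'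
  have key : ∀ (y y' : ι), D.toRTree.IsChild y x → D.toRTree.IsChild y' x → y ≠ y' →
      ∀ n m : ℕ, D.toRTree.parent^[n] z = y → D.toRTree.parent^[m] z = y' → n ≤ m → False := by
    intro y y' hxy hxy' hne n m hn hm hnm
    have h1 : D.toRTree.parent^[m - n] y = y' := by
      rw [← hn, ← Function.iterate_add_apply]
      rw [show m - n + n = m by omega]
      exact hm
    rcases Nat.eq_or_lt_of_le hnm with heq | hlt
    · exact hne (by rw [← h1, heq, Nat.sub_self]; rfl)
    · have h2 : D.toRTree.Anc y' x := by
        refine ⟨m - n - 1, ?_⟩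
        have h3 : D.toRTree.parent^[(m - n - 1) + 1] y = y' := by
          rw [show m - n - 1 + 1 = m - n by omega]; exact h1
        rw [← hxy.2, ← Function.iterate_succ_apply]
        exact h3
      rw [← hxy'.2] at h2
      exact D.toRTree.not_anc_parent hxy'.1 h2
  rcases Nat.le_total n m with h | h
  · exact key y y' hxy hxy' hne n m hn hm h
  · exact key y' y hxy' hxy hne.symm m n hm hn h

end SepLemmas

section WalkLemmas

open SimpleGraph

variable {V : Type*} {G : SimpleGraph V}

lemma exists_walk_in_of_induce_connected {s : Set V} (h : (G.induce s).Connected)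
    {a b : V} (ha : a ∈ s) (hb : b ∈ s) :
    ∃ r : G.Walk a b, ∀ w ∈ r.support, w ∈ s := by
  obtain ⟨p⟩ := h.preconnected ⟨a, ha⟩ ⟨b, hb⟩
  refine ⟨p.map ⟨Subtype.val, fun hadj => hadj⟩, ?_⟩
  intro w hw
  rw [SimpleGraph.Walk.support_map] at hw
  obtain ⟨w', _, rfl⟩ := List.mem_map.mp hw
  exact w'.2

lemma support_decomp {a b : V} (P : G.Walk a b) (htne : P.support.tail ≠ []) :
    ∃ M : List V, P.support = a :: (M ++ [b]) := by
  refine ⟨P.support.tail.dropLast, ?_⟩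
  have hsupp : P.support = a :: P.support.tail := P.support_eq_cons
  have hL := List.dropLast_append_getLast htne
  have hgl : P.support.getLast? = some b := by
    rw [List.getLast?_eq_getLast (l := P.support) (by simp), P.getLast_support]
  have hgl2 : P.support.getLast? = some (P.support.tail.getLast htne) := by
    conv_lhs => rw [hsupp, ← hL, ← List.cons_append, List.getLast?_concat]
  have hcb : P.support.tail.getLast htne = b := by
    have := hgl2.symm.trans hgl
    exact Option.some.inj this
  rw [hcb] at hL
  conv_lhs => rw [hsupp, ← hL]

lemma interior_spec {a b : V} {P : G.Walk a b} (hP : P.IsPath) {w : V}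
    (hw : w ∈ P.support.tail.dropLast) : w ∈ P.support ∧ w ≠ a ∧ w ≠ b := by
  have htne : P.support.tail ≠ [] := by
    rintro h; rw [h] at hw; simp at hw
  obtain ⟨M, hM⟩ := support_decomp P htne
  have htail : P.support.tail = M ++ [b] := by rw [hM]; rfl
  have hwM : w ∈ M := by
    rw [htail, List.dropLast_concat] at hw; exact hw
  have hnodup : P.support.Nodup := hP.support_nodup
  rw [hM] at hnodup
  have h1 := List.nodup_cons.mp hnodup
  have h2 := List.disjoint_of_nodup_append h1.2
  refine ⟨by rw [hM]; simp [hwM], ?_, ?_⟩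
  · rintro rfl; exact h1.1 (by simp [hwM])
  · rintro rfl; exact h2 hwM (List.mem_singleton_self w)

lemma endpoint_of_not_interior {a b : V} {P : G.Walk a b} (hP : P.IsPath) {w : V}
    (hw : w ∈ P.support) (h : w ∉ P.support.tail.dropLast) : w = a ∨ w = b := by
  rcases eq_or_ne P.support.tail [] with hte | htne
  · have hsupp : P.support = a :: P.support.tail := P.support_eq_cons
    rw [hsupp, hte] at hw
    simp at hw
    exact Or.inl hw
  · obtain ⟨M, hM⟩ := support_decomp P htne
    have htail : P.support.tail = M ++ [b] := by rw [hM]; rfl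
    rw [htail, List.dropLast_concat] at h
    rw [hM] at hw
    rcases List.mem_cons.mp hw with rfl | hw2
    · exact Or.inl rfl
    · rcases List.mem_append.mp hw2 with hw3 | hw3
      · exact absurd hw3 h
      · exact Or.inr (List.mem_singleton.mp hw3)

end WalkLemmas

section Lift

open SimpleGraph

variable {V ι : Type*} {G : SimpleGraph V}

/-- Lift a walk in the bag graph between two bag vertices to a walk in `G`. -/
lemma lift_walk (D : TreeDecomp G ι) (hreg : D.Regular) (x : ι) {v : ↥(D.bag x)} :
    ∀ (n : ℕ) (u : ↥(D.bag x)) (s₁ : ↥(D.bag x) ⊕ {y : ι // D.toRTree.IsChild y x})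
      (p : (D.bgraph x).Walk s₁ (Sum.inl v)), s₁ = Sum.inl u → p.length ≤ n →
      ∃ q : G.Walk ↑u ↑v, ∀ w ∈ q.support,
        (∃ u' : ↥(D.bag x), w = ↑u' ∧ Sum.inl u' ∈ p.support) ∨
        (∃ y : {y : ι // D.toRTree.IsChild y x}, w ∈ D.comp y.1 ∧ Sum.inr y ∈ p.support) := by
  intro n
  induction n with
  | zero =>
    intro u s₁ p hs hlen
    cases p with
    | nil =>
      have h2 : v = u := by injection hs
      subst h2
      refine ⟨Walk.nil, ?_⟩
      intro w hw
      simp only [Walk.support_nil, List.mem_singleton] at hw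
      exact Or.inl ⟨v, hw, by simp⟩
    | cons h p' => simp at hlen
  | succ n ih =>
    intro u s₁ p hs hlen
    cases p with
    | nil =>
      have h2 : v = u := by injection hs
      subst h2
      refine ⟨Walk.nil, ?_⟩
      intro w hw
      simp only [Walk.support_nil, List.mem_singleton] at hw
      exact Or.inl ⟨v, hw, by simp⟩
    | @cons _ b _ h p' =>
      subst hs
      match b, h, p' with
      | Sum.inl u₂, h, p' =>
        obtain ⟨q', hq'⟩ := ih u₂ _ p' rfl (by
          simp only [Walk.length_cons] at hlen; omega)
        have hG : G.Adj ↑u ↑u₂ := h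
        refine ⟨Walk.cons hG q', ?_⟩
        intro w hw
        rw [Walk.support_cons, List.mem_cons] at hw
        rcases hw with hw | hw
        · exact Or.inl ⟨u, hw, by simp⟩
        · rcases hq' w hw with ⟨u', h1, h2⟩ | ⟨y, h1, h2⟩
          · exact Or.inl ⟨u', h1, by simp [h2]⟩
          · exact Or.inr ⟨y, h1, by simp [h2]⟩
      | Sum.inr y, h, p' =>
        match p' with
        | Walk.cons (v := Sum.inr y₂) h₂ p'' => exact absurd h₂ (by simp [TreeDecomp.bgraph])
        | Walk.cons (v := Sum.inl u₂) h₂ p'' =>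
          obtain ⟨w₁, hw₁, ha₁⟩ : ∃ w ∈ D.comp y.1, G.Adj ↑u w := id h
          obtain ⟨w₂, hw₂, ha₂⟩ : ∃ w ∈ D.comp y.1, G.Adj ↑u₂ w := id h₂
          obtain ⟨r, hr⟩ := exists_walk_in_of_induce_connected
            ((hreg y.1 y.2.1).2.1) hw₁ hw₂
          obtain ⟨q'', hq''⟩ := ih u₂ _ p'' rfl (by
            simp only [Walk.length_cons] at hlen ⊢; omega)
          refine ⟨Walk.cons ha₁ (r.append (Walk.cons ha₂.symm q'')), ?_⟩
          intro w hw
          rw [Walk.support_cons, List.mem_cons] at hw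
          rcases hw with hw | hw
          · exact Or.inl ⟨u, hw, by simp⟩
          · rw [Walk.mem_support_append_iff] at hw
            rcases hw with hw | hw
            · exact Or.inr ⟨y, hr w hw, by simp⟩
            · rw [Walk.support_cons, List.mem_cons] at hw
              rcases hw with hw | hw
              · exact Or.inr ⟨y, by rw [hw]; exact hw₂, by simp⟩
              · rcases hq'' w hw with ⟨u', h1, h2⟩ | ⟨y', h1, h2⟩
                · exact Or.inl ⟨u', h1, by simp [h2]⟩
                · exact Or.inr ⟨y', h1, by simp [h2]⟩

end Lift

/-- If `G` is `K_t`-topological-minor-free and `(T,bag)` is a regular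
tree decomposition of adhesion at most `a`, then every bag graph is
`K_{max(t,a+2)}`-topological-minor-free. -/
theorem stmt4 {V ι : Type*} [Fintype V] [Fintype ι] {G : SimpleGraph V}
    (D : TreeDecomp G ι) (hreg : D.Regular)
    (a : ℕ) (hadh : ∀ x : ι, (D.adh x).ncard ≤ a)
    (t : ℕ) (hfree : TopMinorFree t G) (x : ι) :
    TopMinorFree (max t (a + 2)) (D.bgraph x) := by
  classical
  set t' := max t (a + 2) with ht'
  rintro ⟨η, p, hinj, hpath, hdisj⟩
  by_cases hc : ∃ (i : Fin t') (y : {y : ι // D.toRTree.IsChild y x}), η i = Sum.inr y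
  · -- Case A: a child node is a branch vertex
    obtain ⟨i, y, hi⟩ := hc
    have hadjpf : ∀ j : Fin t', j ≠ i → (⊤ : SimpleGraph (Fin t')).Adj i j := by
      intro j hj
      rw [SimpleGraph.top_adj]
      exact hj.symm
    have hsnd : ∀ (j : Fin t') (hj : j ≠ i),
        ∃ u : ↥(D.bag x), (p i j (hadjpf j hj)).getVert 1 = Sum.inl u ∧ (u : V) ∈ D.adh y.1 := by
      intro j hj
      have hne : η i ≠ η j := fun h => hj (hinj h).symm
      have hnn : ¬ (p i j (hadjpf j hj)).Nil := SimpleGraph.Walk.not_nil_of_ne hne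
      have hadj1 : (D.bgraph x).Adj (η i) ((p i j (hadjpf j hj)).getVert 1) :=
        by have h0 := (p i j (hadjpf j hj)).adj_getVert_succ (i := 0)
             (SimpleGraph.Walk.not_nil_iff_lt_length.mp hnn)
           rwa [SimpleGraph.Walk.getVert_zero] at h0
      obtain ⟨gv, hgv⟩ : ∃ gv, (p i j (hadjpf j hj)).getVert 1 = gv := ⟨_, rfl⟩
      rw [hgv, hi] at hadj1
      cases gv with
      | inl u =>
        obtain ⟨w, hw, haw⟩ : ∃ w ∈ D.comp y.1, G.Adj ↑u w := hadj1
        exact ⟨u, hgv, D.adh_of_adj_comp y.2 u.2 hw haw⟩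
      | inr y₂ =>
        exact hadj1.elim
    choose F hF1 hF2 using hsnd
    have hsupmem : ∀ (j : Fin t') (hj : j ≠ i),
        (p i j (hadjpf j hj)).getVert 1 ∈ (p i j (hadjpf j hj)).support := by
      intro j hj
      rw [SimpleGraph.Walk.mem_support_iff_exists_getVert]
      refine ⟨1, rfl, ?_⟩
      have hne : η i ≠ η j := fun h => hj (hinj h).symm
      have := SimpleGraph.Walk.not_nil_iff_lt_length.mp
        (SimpleGraph.Walk.not_nil_of_ne (p := p i j (hadjpf j hj)) hne)
      omega
    have hFinj : ∀ (j j' : Fin t') (hj : j ≠ i) (hj' : j' ≠ i),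
        F j hj = F j' hj' → j = j' := by
      intro j j' hj hj' hFe
      by_contra hjj
      have hgve : (p i j (hadjpf j hj)).getVert 1 = (p i j' (hadjpf j' hj')).getVert 1 := by
        rw [hF1 j hj, hF1 j' hj', hFe]
      have hsne : s(i, j) ≠ s(i, j') := by
        intro hh
        rcases Sym2.eq_iff.mp hh with ⟨-, h2⟩ | ⟨h1, h2⟩
        · exact hjj h2
        · exact hj' h1.symm
      have hm1 : (p i j (hadjpf j hj)).getVert 1 ∈ (p i j (hadjpf j hj)).support :=
        hsupmem j hj
      have hm2 := hsupmem j' hj'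
      rw [← hgve] at hm2
      have hwne : (p i j (hadjpf j hj)).getVert 1 ≠ η i := by
        have hh : (D.bgraph x).Adj (η i) ((p i j (hadjpf j hj)).getVert 1) := by
          have h0 := (p i j (hadjpf j hj)).adj_getVert_succ (i := 0)
            (SimpleGraph.Walk.not_nil_iff_lt_length.mp
              (SimpleGraph.Walk.not_nil_of_ne (fun h => hj (hinj h).symm)))
          rwa [SimpleGraph.Walk.getVert_zero] at h0
        exact Ne.symm hh.ne
      have he1 := endpoint_of_not_interior (hpath i j' (hadjpf j' hj')) hm2
          (hdisj i j (hadjpf j hj) i j' (hadjpf j' hj') hsne _ hm1)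
      have he2 := endpoint_of_not_interior (hpath i j (hadjpf j hj)) hm1
          (hdisj i j' (hadjpf j' hj') i j (hadjpf j hj) (fun h => hsne h.symm) _ hm2)
      rcases he1 with h1 | h1
      · exact hwne h1
      rcases he2 with h2 | h2
      · exact hwne h2
      exact hjj (hinj (h2.symm.trans h1))
    -- cardinality contradiction
    have hcard1 : Nat.card {j : Fin t' // j ≠ i} ≤ Nat.card ↥(D.adh y.1) := by
      apply Nat.card_le_card_of_injective
        (fun j : {j : Fin t' // j ≠ i} => (⟨↑(F j.1 j.2), hF2 j.1 j.2⟩ : ↥(D.adh y.1)))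
      intro j j' hgj
      have h1 : (F j.1 j.2 : V) = ↑(F j'.1 j'.2) := by
        simpa using congrArg Subtype.val hgj
      have hFe : F j.1 j.2 = F j'.1 j'.2 := Subtype.coe_injective h1
      exact Subtype.ext (hFinj j.1 j'.1 j.2 j'.2 hFe)
    have hcard2 : Nat.card {j : Fin t' // j ≠ i} = t' - 1 := by
      rw [Nat.card_eq_fintype_card]
      have : Fintype.card {j : Fin t' // ¬ (j = i)} =
          Fintype.card (Fin t') - Fintype.card {j : Fin t' // j = i} :=
        Fintype.card_subtype_compl _
      simpa [Fintype.card_subtype_eq] using this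
    have hcard3 : Nat.card ↥(D.adh y.1) = (D.adh y.1).ncard :=
      Nat.card_coe_set_eq _
    have hta : a + 2 ≤ t' := le_max_right _ _
    have := hadh y.1
    omega
  · -- Case B: all branch vertices are bag vertices
    push_neg at hc
    have hU0 : ∀ i : Fin t', ∃ u, η i = Sum.inl u := by
      intro i
      cases h : η i with
      | inl u => exact ⟨u, rfl⟩
      | inr y => exact absurd h (hc i y)
    choose U hU using hU0
    apply hfree
    have ht : t ≤ t' := le_max_left _ _
    set e : Fin t → Fin t' := Fin.castLE ht with he
    have einj : Function.Injective e := Fin.castLE_injective ht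
    have adjE : ∀ i j : Fin t, (⊤ : SimpleGraph (Fin t)).Adj i j →
        (⊤ : SimpleGraph (Fin t')).Adj (e i) (e j) := by
      intro i j h
      rw [SimpleGraph.top_adj] at h ⊢
      exact fun hh => h (einj hh)
    have key : ∀ (i j : Fin t) (h : (⊤ : SimpleGraph (Fin t)).Adj i j),
        ∃ q : G.Walk ↑(U (e i)) ↑(U (e j)), ∀ w ∈ q.support,
          (∃ u' : ↥(D.bag x), w = ↑u' ∧
            Sum.inl u' ∈ (p (e i) (e j) (adjE i j h)).support) ∨
          (∃ y : {y : ι // D.toRTree.IsChild y x}, w ∈ D.comp y.1 ∧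
            Sum.inr y ∈ (p (e i) (e j) (adjE i j h)).support) := by
      intro i j h
      obtain ⟨q, hq⟩ := lift_walk D hreg x
        ((p (e i) (e j) (adjE i j h)).copy (hU (e i)) (hU (e j))).length (U (e i)) _
        ((p (e i) (e j) (adjE i j h)).copy (hU (e i)) (hU (e j))) rfl le_rfl
      refine ⟨q, ?_⟩
      intro w hw
      have hres := hq w hw
      rwa [SimpleGraph.Walk.support_copy] at hres
    choose Q hQ using key
    refine ⟨fun i => ↑(U (e i)), fun i j h => (Q i j h).bypass, ?_, ?_, ?_⟩
    · intro i j hij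
      have h1 : U (e i) = U (e j) := Subtype.coe_injective hij
      have h2 : η (e i) = η (e j) := by rw [hU (e i), hU (e j), h1]
      exact einj (hinj h2)
    · intro i j h
      exact SimpleGraph.Walk.bypass_isPath _
    · intro i j h i₂ j₂ h₂ hne w hw hint
      have hne' : s(e i, e j) ≠ s(e i₂, e j₂) := by
        intro hh
        apply hne
        rcases Sym2.eq_iff.mp hh with ⟨h1, h2⟩ | ⟨h1, h2⟩
        · rw [einj h1, einj h2]
        · rw [einj h1, einj h2]
          exact Sym2.eq_swap
      have hw1 : w ∈ (Q i j h).support :=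
        SimpleGraph.Walk.support_bypass_subset _ hw
      have hispec := interior_spec (SimpleGraph.Walk.bypass_isPath (Q i₂ j₂ h₂)) hint
      have hw2 : w ∈ (Q i₂ j₂ h₂).support :=
        SimpleGraph.Walk.support_bypass_subset _ hispec.1
      have hne2 : w ≠ ↑(U (e i₂)) := hispec.2.1
      have hne3 : w ≠ ↑(U (e j₂)) := hispec.2.2
      rcases hQ i j h w hw1 with ⟨u₁, hu₁, m₁⟩ | ⟨y₁, hy₁, m₁⟩
      · rcases hQ i₂ j₂ h₂ w hw2 with ⟨u₂, hu₂, m₂⟩ | ⟨y₂, hy₂, m₂⟩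
        · -- both bag vertices
          have huu : u₁ = u₂ := Subtype.coe_injective (hu₁.symm.trans hu₂)
          subst huu
          have hnotint := hdisj (e i) (e j) (adjE i j h) (e i₂) (e j₂) (adjE i₂ j₂ h₂)
            hne' (Sum.inl u₁) m₁
          rcases endpoint_of_not_interior (hpath (e i₂) (e j₂) (adjE i₂ j₂ h₂)) m₂ hnotint
            with hend | hend
          · rw [hU (e i₂)] at hend
            have : u₁ = U (e i₂) := Sum.inl.inj hend
            exact hne2 (by rw [hu₁, this])
          · rw [hU (e j₂)] at hend
            have : u₁ = U (e j₂) := Sum.inl.inj hend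
            exact hne3 (by rw [hu₁, this])
        · -- bag vs comp: disjoint
          exact D.comp_disjoint_bag y₂.2 hy₂ (by rw [hu₁]; exact u₁.2)
      · rcases hQ i₂ j₂ h₂ w hw2 with ⟨u₂, hu₂, m₂⟩ | ⟨y₂, hy₂, m₂⟩
        · exact D.comp_disjoint_bag y₁.2 hy₁ (by rw [hu₂]; exact u₂.2)
        · -- both comp
          have hyy : y₁ = y₂ := by
            by_contra hne''
            exact D.comp_disjoint y₁.2 y₂.2 (fun hv => hne'' (Subtype.ext hv)) hy₁ hy₂
          subst hyy
          have hnotint := hdisj (e i) (e j) (adjE i j h) (e i₂) (e j₂) (adjE i₂ j₂ h₂)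
            hne' (Sum.inr y₁) m₁
          rcases endpoint_of_not_interior (hpath (e i₂) (e j₂) (adjE i₂ j₂ h₂)) m₂ hnotint
            with hend | hend
          · rw [hU (e i₂)] at hend; exact nomatch hend
          · rw [hU (e j₂)] at hend; exact nomatch hend
end

section
/- Fix r ∈ ℕ. For all bi-interface graphs 𝔾 and ℍ of arity r, the abstraction operation commutes with composition: ⌈𝔾·ℍ⌉ = ⌈⌈𝔾⌉·⌈ℍ⌉⌉. Equivalently, the abstraction map is a semigroup homomorphism from bi-interface graphs of arity r under composition · to basic bi-interface graphs of arity r under the operation 𝔸 ⊙ 𝔹 := ⌈𝔸·𝔹⌉. -/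
/-- The three kinds of interface vertices of a basic bi-interface graph:
left-only, right-only, shared. -/
inductive Mark : Type
  | L | R | S
  deriving DecidableEq

/-- A bi-interface graph of arity `r` on the vertex type `α`: a graph together with two
partial maps `left, right : α ⇀ Fin r` (encoded via `Option`). A *valid* bi-interface
graph moreover has `left` and `right` injective and agreeing on common domain;
see `BIGraph.Valid`. -/
structure BIGraph (r : ℕ) (α : Type*) where
  graph : SimpleGraph α
  left : α → Option (Fin r)
  right : α → Option (Fin r)

namespace BIGraph

variable {r : ℕ} {α β : Type*}

/-- The interface maps are injective and agree on their common domain. -/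
def Valid (𝔾 : BIGraph r α) : Prop :=
  (∀ u v : α, ∀ i : Fin r, 𝔾.left u = some i → 𝔾.left v = some i → u = v) ∧
  (∀ u v : α, ∀ i : Fin r, 𝔾.right u = some i → 𝔾.right v = some i → u = v) ∧
  (∀ u : α, ∀ i j : Fin r, 𝔾.left u = some i → 𝔾.right u = some j → i = j)

/-- In the composition `𝔾·ℍ`, the vertex `u` of `𝔾` is identified with the vertex `v`
of `ℍ`. -/
def Ident (𝔾 : BIGraph r α) (ℍ : BIGraph r β) (u : α) (v : β) : Prop :=
  ∃ i : Fin r, 𝔾.right u = some i ∧ ℍ.left v = some i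

/-- The vertex `v` of `ℍ` gets identified with some vertex of `𝔾` in the composition. -/
def Merged (𝔾 : BIGraph r α) (ℍ : BIGraph r β) (v : β) : Prop :=
  ∃ u : α, Ident 𝔾 ℍ u v

/-- One-directional description of adjacency in the composition `𝔾·ℍ` (the actual
adjacency is its symmetrization). A merged vertex of `ℍ` is kept as an isolated,
interface-free vertex; all its edges are transferred to the corresponding vertex
of `𝔾`. -/
def compAdjAux (𝔾 : BIGraph r α) (ℍ : BIGraph r β) : α ⊕ β → α ⊕ β → Prop
  | Sum.inl u, Sum.inl u' =>
      𝔾.graph.Adj u u' ∨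
        ∃ v v' : β, ℍ.graph.Adj v v' ∧ Ident 𝔾 ℍ u v ∧ Ident 𝔾 ℍ u' v'
  | Sum.inl u, Sum.inr v' =>
      ¬ Merged 𝔾 ℍ v' ∧ ∃ v : β, ℍ.graph.Adj v v' ∧ Ident 𝔾 ℍ u v
  | Sum.inr v, Sum.inl u' =>
      ¬ Merged 𝔾 ℍ v ∧ ∃ v' : β, ℍ.graph.Adj v' v ∧ Ident 𝔾 ℍ u' v'
  | Sum.inr v, Sum.inr v' =>
      ¬ Merged 𝔾 ℍ v ∧ ¬ Merged 𝔾 ℍ v' ∧ ℍ.graph.Adj v v'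

open Classical in
/-- The composition `𝔾·ℍ` of two bi-interface graphs of arity `r`: obtained from the
disjoint union by identifying each `u ∈ dom(right_𝔾)` with the vertex `v ∈ dom(left_ℍ)`
carrying the same label, whenever such `v` exists; the left interface is that of `𝔾`
and the right interface is that of `ℍ` (transported through the identification). -/
noncomputable def comp (𝔾 : BIGraph r α) (ℍ : BIGraph r β) : BIGraph r (α ⊕ β) where
  graph :=
    { Adj := fun a b => a ≠ b ∧ (compAdjAux 𝔾 ℍ a b ∨ compAdjAux 𝔾 ℍ b a)
      symm := ⟨fun a b h => ⟨h.1.symm, h.2.symm⟩⟩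
      loopless := ⟨fun a h => h.1 rfl⟩ }
  left := fun a =>
    match a with
    | Sum.inl u => 𝔾.left u
    | Sum.inr _ => none
  right := fun a =>
    match a with
    | Sum.inl u =>
        if h : ∃ j : Fin r, ∃ v : β, Ident 𝔾 ℍ u v ∧ ℍ.right v = some j then some h.choose
        else none
    | Sum.inr v => if Merged 𝔾 ℍ v then none else ℍ.right v

/-- The renaming map `ι` of the abstraction operation, as a partial map: a vertex in the
domain of an interface map is sent to its label together with a mark recording which of
the interfaces it belongs to. -/
def iota (𝔾 : BIGraph r α) (u : α) : Option (Fin r × Mark) :=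
  match 𝔾.left u, 𝔾.right u with
  | some i, none => some (i, Mark.L)
  | none, some i => some (i, Mark.R)
  | some i, some _ => some (i, Mark.S)
  | none, none => none

open Classical in
/-- The abstraction `⌈𝔾⌉` of a bi-interface graph: a basic bi-interface graph on the
vertex type `Fin r × Mark`, where `ι(u)` and `ι(v)` are adjacent iff `𝔾` contains a
`u`–`v` path passing through no other interface vertex, and interfaces are inherited. -/
noncomputable def abstr (𝔾 : BIGraph r α) : BIGraph r (Fin r × Mark) where
  graph :=
    { Adj := fun p q => p ≠ q ∧ ∃ u v : α, 𝔾.iota u = some p ∧ 𝔾.iota v = some q ∧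
        ∃ w : 𝔾.graph.Walk u v, ∀ z ∈ w.support, z ≠ u → z ≠ v → 𝔾.iota z = none
      symm := by
        constructor
        rintro p q ⟨hpq, u, v, hu, hv, w, hw⟩
        refine ⟨hpq.symm, v, u, hv, hu, w.reverse, ?_⟩
        intro z hz hzv hzu
        rw [SimpleGraph.Walk.support_reverse, List.mem_reverse] at hz
        exact hw z hz hzu hzv
      loopless := ⟨fun p h => h.1 rfl⟩ }
  left := fun p =>
    if ∃ u : α, 𝔾.iota u = some p ∧ ∃ i : Fin r, 𝔾.left u = some i then some p.1 else none
  right := fun p =>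
    if ∃ u : α, 𝔾.iota u = some p ∧ ∃ i : Fin r, 𝔾.right u = some i then some p.1 else none

end BIGraph


/-! ### Auxiliary lemmas for `stmt17` -/

namespace BIGraph

section Aux

variable {r : ℕ} {α β : Type*}

lemma iota_eq_L {𝔾 : BIGraph r α} {u : α} {i : Fin r} :
    𝔾.iota u = some (i, Mark.L) ↔ 𝔾.left u = some i ∧ 𝔾.right u = none := by
  cases hl : 𝔾.left u <;> cases hr : 𝔾.right u <;> simp [iota, hl, hr]

lemma iota_eq_R {𝔾 : BIGraph r α} {u : α} {i : Fin r} :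
    𝔾.iota u = some (i, Mark.R) ↔ 𝔾.left u = none ∧ 𝔾.right u = some i := by
  cases hl : 𝔾.left u <;> cases hr : 𝔾.right u <;> simp [iota, hl, hr]

lemma iota_eq_S {𝔾 : BIGraph r α} {u : α} {i : Fin r} :
    𝔾.iota u = some (i, Mark.S) ↔ 𝔾.left u = some i ∧ ∃ j, 𝔾.right u = some j := by
  cases hl : 𝔾.left u <;> cases hr : 𝔾.right u <;> simp [iota, hl, hr]

lemma iota_eq_none {𝔾 : BIGraph r α} {u : α} :
    𝔾.iota u = none ↔ 𝔾.left u = none ∧ 𝔾.right u = none := by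
  cases hl : 𝔾.left u <;> cases hr : 𝔾.right u <;> simp [iota, hl, hr]

lemma iota_inj {𝔾 : BIGraph r α} (h𝔾 : 𝔾.Valid) {u u' : α} {p : Fin r × Mark}
    (hu : 𝔾.iota u = some p) (hu' : 𝔾.iota u' = some p) : u = u' := by
  obtain ⟨i, m⟩ := p
  cases m
  · rw [iota_eq_L] at hu hu'
    exact h𝔾.1 u u' i hu.1 hu'.1
  · rw [iota_eq_R] at hu hu'
    exact h𝔾.2.1 u u' i hu.2 hu'.2
  · rw [iota_eq_S] at hu hu'
    exact h𝔾.1 u u' i hu.1 hu'.1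

lemma left_isSome_iota {𝔾 : BIGraph r α} {u : α} {i : Fin r} (h : 𝔾.left u = some i) :
    ∃ m, 𝔾.iota u = some (i, m) := by
  cases hr : 𝔾.right u <;> simp [iota, h, hr]

lemma right_isSome_iota {𝔾 : BIGraph r α} {u : α} {i : Fin r} (h𝔾 : 𝔾.Valid)
    (h : 𝔾.right u = some i) : ∃ m, 𝔾.iota u = some (i, m) := by
  cases hl : 𝔾.left u with
  | none => exact ⟨Mark.R, by simp [iota, h, hl]⟩
  | some j =>
    have := h𝔾.2.2 u j i hl h
    subst this
    exact ⟨Mark.S, by simp [iota, h, hl]⟩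

end Aux

end BIGraph

namespace BIGraph

section Aux2

variable {r : ℕ} {α β : Type*}

lemma left_of_iota {𝔾 : BIGraph r α} {u : α} {p : Fin r × Mark}
    (hu : 𝔾.iota u = some p) (h2 : p.2 ≠ Mark.R) : 𝔾.left u = some p.1 := by
  obtain ⟨i, m⟩ := p
  cases m
  · exact (iota_eq_L.1 hu).1
  · exact absurd rfl h2
  · exact (iota_eq_S.1 hu).1

lemma right_of_iota {𝔾 : BIGraph r α} (h𝔾 : 𝔾.Valid) {u : α} {p : Fin r × Mark}
    (hu : 𝔾.iota u = some p) (h2 : p.2 ≠ Mark.L) : 𝔾.right u = some p.1 := by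
  obtain ⟨i, m⟩ := p
  cases m
  · exact absurd rfl h2
  · exact (iota_eq_R.1 hu).2
  · obtain ⟨hl, j, hr⟩ := iota_eq_S.1 hu
    rw [hr, h𝔾.2.2 u i j hl hr]

lemma mark_of_left {𝔾 : BIGraph r α} {u : α} {p : Fin r × Mark} {j : Fin r}
    (hu : 𝔾.iota u = some p) (hl : 𝔾.left u = some j) : j = p.1 ∧ p.2 ≠ Mark.R := by
  obtain ⟨i, m⟩ := p
  cases m
  · have := (iota_eq_L.1 hu).1; rw [this] at hl; exact ⟨(Option.some.inj hl).symm, by simp⟩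
  · have := (iota_eq_R.1 hu).1; rw [this] at hl; exact nomatch hl
  · have := (iota_eq_S.1 hu).1; rw [this] at hl; exact ⟨(Option.some.inj hl).symm, by simp⟩

lemma mark_of_right {𝔾 : BIGraph r α} (h𝔾 : 𝔾.Valid) {u : α} {p : Fin r × Mark} {j : Fin r}
    (hu : 𝔾.iota u = some p) (hr : 𝔾.right u = some j) : j = p.1 ∧ p.2 ≠ Mark.L := by
  obtain ⟨i, m⟩ := p
  cases m
  · have := (iota_eq_L.1 hu).2; rw [this] at hr; exact nomatch hr
  · have := (iota_eq_R.1 hu).2; rw [this] at hr; exact ⟨(Option.some.inj hr).symm, by simp⟩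
  · obtain ⟨hl, j', hr'⟩ := iota_eq_S.1 hu
    have := h𝔾.2.2 u i j' hl hr'
    subst this
    rw [hr'] at hr
    exact ⟨(Option.some.inj hr).symm, by simp⟩

open Classical in
lemma abstr_left_eq (𝔾 : BIGraph r α) (p : Fin r × Mark) :
    (𝔾.abstr).left p =
      if p.2 ≠ Mark.R ∧ ∃ u, 𝔾.iota u = some p then some p.1 else none := by
  have hiff : (∃ u, 𝔾.iota u = some p ∧ ∃ i, 𝔾.left u = some i) ↔
      (p.2 ≠ Mark.R ∧ ∃ u, 𝔾.iota u = some p) := by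
    constructor
    · rintro ⟨u, hu, i, hl⟩
      exact ⟨(mark_of_left hu hl).2, u, hu⟩
    · rintro ⟨h2, u, hu⟩
      exact ⟨u, hu, p.1, left_of_iota hu h2⟩
  simp only [abstr]
  exact if_congr hiff rfl rfl

open Classical in
lemma abstr_right_eq {𝔾 : BIGraph r α} (h𝔾 : 𝔾.Valid) (p : Fin r × Mark) :
    (𝔾.abstr).right p =
      if p.2 ≠ Mark.L ∧ ∃ u, 𝔾.iota u = some p then some p.1 else none := by
  have hiff : (∃ u, 𝔾.iota u = some p ∧ ∃ i, 𝔾.right u = some i) ↔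
      (p.2 ≠ Mark.L ∧ ∃ u, 𝔾.iota u = some p) := by
    constructor
    · rintro ⟨u, hu, i, hr⟩
      exact ⟨(mark_of_right h𝔾 hu hr).2, u, hu⟩
    · rintro ⟨h2, u, hu⟩
      exact ⟨u, hu, p.1, right_of_iota h𝔾 hu h2⟩
  simp only [abstr]
  exact if_congr hiff rfl rfl

lemma abstr_adj (𝔾 : BIGraph r α) {p q : Fin r × Mark} :
    (𝔾.abstr).graph.Adj p q ↔ p ≠ q ∧ ∃ u v : α, 𝔾.iota u = some p ∧ 𝔾.iota v = some q ∧
      ∃ w : 𝔾.graph.Walk u v, ∀ z ∈ w.support, z ≠ u → z ≠ v → 𝔾.iota z = none :=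
  Iff.rfl

lemma comp_left_inl (𝔾 : BIGraph r α) (ℍ : BIGraph r β) (u : α) :
    (𝔾.comp ℍ).left (Sum.inl u) = 𝔾.left u := rfl

lemma comp_left_inr (𝔾 : BIGraph r α) (ℍ : BIGraph r β) (v : β) :
    (𝔾.comp ℍ).left (Sum.inr v) = none := rfl

open Classical in
lemma comp_right_inr (𝔾 : BIGraph r α) (ℍ : BIGraph r β) (v : β) :
    (𝔾.comp ℍ).right (Sum.inr v) = if Merged 𝔾 ℍ v then none else ℍ.right v := rfl

open Classical in
lemma comp_right_inl {𝔾 : BIGraph r α} {ℍ : BIGraph r β} (hℍ : ℍ.Valid) (u : α) :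
    (𝔾.comp ℍ).right (Sum.inl u) =
      if ∃ v, (∃ k, 𝔾.right u = some k ∧ ℍ.left v = some k) ∧ ∃ j, ℍ.right v = some j
      then 𝔾.right u else none := by
  show (if h : ∃ j : Fin r, ∃ v : β, Ident 𝔾 ℍ u v ∧ ℍ.right v = some j then some h.choose
        else none) = _
  by_cases hP : ∃ j : Fin r, ∃ v : β, Ident 𝔾 ℍ u v ∧ ℍ.right v = some j
  · rw [dif_pos hP]
    obtain ⟨v, ⟨k, hru, hlv⟩, hrv⟩ := hP.choose_spec
    rw [if_pos ⟨v, ⟨k, hru, hlv⟩, hP.choose, hrv⟩, hru]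
    exact congrArg some (hℍ.2.2 v k hP.choose hlv hrv).symm
  · rw [dif_neg hP, if_neg]
    rintro ⟨v, ⟨k, h1, h2⟩, j, h3⟩
    exact hP ⟨j, v, ⟨k, h1, h2⟩, h3⟩

lemma comp_adj_inl_inl {𝔾 : BIGraph r α} {ℍ : BIGraph r β} {u u' : α} :
    (𝔾.comp ℍ).graph.Adj (Sum.inl u) (Sum.inl u') ↔ u ≠ u' ∧
      (𝔾.graph.Adj u u' ∨
        ∃ v v', ℍ.graph.Adj v v' ∧ Ident 𝔾 ℍ u v ∧ Ident 𝔾 ℍ u' v') := by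
  show ((Sum.inl u : α ⊕ β) ≠ Sum.inl u' ∧ _) ↔ _
  simp only [compAdjAux, ne_eq, Sum.inl.injEq]
  constructor
  · rintro ⟨hne, (h | ⟨v, v', ha, h1, h2⟩) | (h | ⟨v, v', ha, h1, h2⟩)⟩
    · exact ⟨hne, Or.inl h⟩
    · exact ⟨hne, Or.inr ⟨v, v', ha, h1, h2⟩⟩
    · exact ⟨hne, Or.inl h.symm⟩
    · exact ⟨hne, Or.inr ⟨v', v, ha.symm, h2, h1⟩⟩
  · rintro ⟨hne, h⟩
    exact ⟨hne, Or.inl h⟩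

lemma comp_adj_inl_inr {𝔾 : BIGraph r α} {ℍ : BIGraph r β} {u : α} {v' : β} :
    (𝔾.comp ℍ).graph.Adj (Sum.inl u) (Sum.inr v') ↔
      ¬ Merged 𝔾 ℍ v' ∧ ∃ v, ℍ.graph.Adj v v' ∧ Ident 𝔾 ℍ u v := by
  show ((Sum.inl u : α ⊕ β) ≠ Sum.inr v' ∧ _) ↔ _
  simp only [compAdjAux]
  constructor
  · rintro ⟨-, h | h⟩ <;> exact h
  · intro h
    exact ⟨by simp, Or.inl h⟩

lemma comp_adj_inr_inl {𝔾 : BIGraph r α} {ℍ : BIGraph r β} {u : α} {v : β} :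
    (𝔾.comp ℍ).graph.Adj (Sum.inr v) (Sum.inl u) ↔
      ¬ Merged 𝔾 ℍ v ∧ ∃ v', ℍ.graph.Adj v' v ∧ Ident 𝔾 ℍ u v' := by
  rw [SimpleGraph.adj_comm]
  exact comp_adj_inl_inr

lemma comp_adj_inr_inr {𝔾 : BIGraph r α} {ℍ : BIGraph r β} {v v' : β} :
    (𝔾.comp ℍ).graph.Adj (Sum.inr v) (Sum.inr v') ↔
      ¬ Merged 𝔾 ℍ v ∧ ¬ Merged 𝔾 ℍ v' ∧ ℍ.graph.Adj v v' := by
  show ((Sum.inr v : α ⊕ β) ≠ Sum.inr v' ∧ _) ↔ _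
  simp only [compAdjAux]
  constructor
  · rintro ⟨hne, ⟨h1, h2, h3⟩ | ⟨h1, h2, h3⟩⟩
    · exact ⟨h1, h2, h3⟩
    · exact ⟨h2, h1, h3.symm⟩
  · rintro ⟨h1, h2, h3⟩
    exact ⟨by simpa using h3.ne, Or.inl ⟨h1, h2, h3⟩⟩

lemma valid_abstr {𝔾 : BIGraph r α} (h𝔾 : 𝔾.Valid) : (𝔾.abstr).Valid := by
  refine ⟨?_, ?_, ?_⟩
  · intro p p' i hp hp'
    rw [abstr_left_eq] at hp hp'
    split_ifs at hp hp' with h1 h2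
    obtain ⟨hm, u, hu⟩ := h1
    obtain ⟨hm', u', hu'⟩ := h2
    have hi : p.1 = i := Option.some.inj hp
    have hi' : p'.1 = i := Option.some.inj hp'
    have huu : u = u' := h𝔾.1 u u' i (hi ▸ left_of_iota hu hm) (hi' ▸ left_of_iota hu' hm')
    subst huu
    rw [hu] at hu'
    exact Option.some.inj hu'
  · intro p p' i hp hp'
    rw [abstr_right_eq h𝔾] at hp hp'
    split_ifs at hp hp' with h1 h2
    obtain ⟨hm, u, hu⟩ := h1
    obtain ⟨hm', u', hu'⟩ := h2
    have hi : p.1 = i := Option.some.inj hp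
    have hi' : p'.1 = i := Option.some.inj hp'
    have huu : u = u' := h𝔾.2.1 u u' i (hi ▸ right_of_iota h𝔾 hu hm)
      (hi' ▸ right_of_iota h𝔾 hu' hm')
    subst huu
    rw [hu] at hu'
    exact Option.some.inj hu'
  · intro p i j hl hr
    rw [abstr_left_eq] at hl
    rw [abstr_right_eq h𝔾] at hr
    split_ifs at hl hr
    exact (Option.some.inj hl).symm.trans (Option.some.inj hr)

lemma valid_comp {𝔾 : BIGraph r α} {ℍ : BIGraph r β} (h𝔾 : 𝔾.Valid) (hℍ : ℍ.Valid) :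
    (𝔾.comp ℍ).Valid := by
  refine ⟨?_, ?_, ?_⟩
  · rintro (u | v) (u' | v') i hu hu' <;>
      simp only [comp_left_inl, comp_left_inr] at hu hu'
    · exact congrArg Sum.inl (h𝔾.1 u u' i hu hu')
    · exact nomatch hu'
    · exact nomatch hu
    · exact nomatch hu
  · rintro (u | v) (u' | v') i hu hu'
    · rw [comp_right_inl hℍ] at hu hu'
      split_ifs at hu hu'
      exact congrArg Sum.inl (h𝔾.2.1 u u' i hu hu')
    · rw [comp_right_inl hℍ] at hu
      rw [comp_right_inr] at hu'
      split_ifs at hu hu' with p1 p2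
      obtain ⟨v₀, ⟨k, hru, hlv⟩, j, hrv⟩ := p1
      rw [hru] at hu
      have hk : k = i := Option.some.inj hu
      subst hk
      have hkj : k = j := hℍ.2.2 v₀ k j hlv hrv
      have : v₀ = v' := hℍ.2.1 v₀ v' k (hkj ▸ hrv) hu'
      subst this
      exact absurd ⟨u, k, hru, hlv⟩ p2
    · rw [comp_right_inl hℍ] at hu'
      rw [comp_right_inr] at hu
      split_ifs at hu hu' with p1 p2
      obtain ⟨v₀, ⟨k, hru, hlv⟩, j, hrv⟩ := p2
      rw [hru] at hu'
      have hk : k = i := Option.some.inj hu'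
      subst hk
      have hkj : k = j := hℍ.2.2 v₀ k j hlv hrv
      have : v₀ = v := hℍ.2.1 v₀ v k (hkj ▸ hrv) hu
      subst this
      exact absurd ⟨u', k, hru, hlv⟩ p1
    · rw [comp_right_inr] at hu hu'
      split_ifs at hu hu'
      exact congrArg Sum.inr (hℍ.2.1 v v' i hu hu')
  · rintro (u | v) i j hl hr
    · rw [comp_left_inl] at hl
      rw [comp_right_inl hℍ] at hr
      split_ifs at hr
      exact h𝔾.2.2 u i j hl hr
    · rw [comp_left_inr] at hl
      exact nomatch hl

end Aux2

end BIGraph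

namespace BIGraph

section Aux3

variable {r : ℕ} {α β : Type*}

lemma abstr_left_of {𝔾 : BIGraph r α} {u : α} {p : Fin r × Mark} {k : Fin r}
    (hu : 𝔾.iota u = some p) (hl : 𝔾.left u = some k) : (𝔾.abstr).left p = some k := by
  obtain ⟨h1, h2⟩ := mark_of_left hu hl
  rw [abstr_left_eq, if_pos ⟨h2, u, hu⟩, h1]

lemma abstr_right_of {𝔾 : BIGraph r α} (h𝔾 : 𝔾.Valid) {u : α} {p : Fin r × Mark} {k : Fin r}
    (hu : 𝔾.iota u = some p) (hr : 𝔾.right u = some k) : (𝔾.abstr).right p = some k := by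
  obtain ⟨h1, h2⟩ := mark_of_right h𝔾 hu hr
  rw [abstr_right_eq h𝔾, if_pos ⟨h2, u, hu⟩, h1]

lemma left_of_abstr {𝔾 : BIGraph r α} {u : α} {p : Fin r × Mark} {k : Fin r}
    (hu : 𝔾.iota u = some p) (hA : (𝔾.abstr).left p = some k) : 𝔾.left u = some k := by
  rw [abstr_left_eq] at hA
  split_ifs at hA with h1
  rw [← Option.some.inj hA]
  exact left_of_iota hu h1.1

lemma right_of_abstr {𝔾 : BIGraph r α} (h𝔾 : 𝔾.Valid) {u : α} {p : Fin r × Mark} {k : Fin r}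
    (hu : 𝔾.iota u = some p) (hA : (𝔾.abstr).right p = some k) : 𝔾.right u = some k := by
  rw [abstr_right_eq h𝔾] at hA
  split_ifs at hA with h1
  rw [← Option.some.inj hA]
  exact right_of_iota h𝔾 hu h1.1

lemma exists_abstr_right {𝔾 : BIGraph r α} (h𝔾 : 𝔾.Valid) {k : Fin r} :
    (∃ p, (𝔾.abstr).right p = some k) ↔ ∃ u, 𝔾.right u = some k := by
  constructor
  · rintro ⟨p, hp⟩
    rw [abstr_right_eq h𝔾] at hp
    split_ifs at hp with h1
    obtain ⟨hm, u, hu⟩ := h1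
    exact ⟨u, (Option.some.inj hp) ▸ right_of_iota h𝔾 hu hm⟩
  · rintro ⟨u, hu⟩
    obtain ⟨m, hm⟩ := right_isSome_iota h𝔾 hu
    exact ⟨(k, m), abstr_right_of h𝔾 hm hu⟩

/-- The existence condition appearing in `comp_right_inl` transfers to abstractions. -/
lemma exists_hook {ℍ : BIGraph r β} (hℍ : ℍ.Valid) {k : Fin r} :
    (∃ q, (ℍ.abstr).left q = some k ∧ ∃ j, (ℍ.abstr).right q = some j) ↔
      ∃ v, ℍ.left v = some k ∧ ∃ j, ℍ.right v = some j := by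
  constructor
  · rintro ⟨q, hql, j, hqr⟩
    rw [abstr_left_eq] at hql
    split_ifs at hql with h1
    obtain ⟨hm, v, hv⟩ := h1
    refine ⟨v, (Option.some.inj hql) ▸ left_of_iota hv hm, ?_⟩
    rw [abstr_right_eq hℍ] at hqr
    split_ifs at hqr with h2
    exact ⟨q.1, right_of_iota hℍ hv h2.1⟩
  · rintro ⟨v, hvl, j, hvr⟩
    have hvS : ℍ.iota v = some (k, Mark.S) := iota_eq_S.2 ⟨hvl, j, hvr⟩
    refine ⟨(k, Mark.S), abstr_left_of hvS hvl, j, abstr_right_of hℍ hvS hvr⟩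

lemma merged_match {𝔾 : BIGraph r α} {ℍ : BIGraph r β} (h𝔾 : 𝔾.Valid) (hℍ : ℍ.Valid)
    {v : β} {q : Fin r × Mark} (hv : ℍ.iota v = some q) :
    Merged 𝔾 ℍ v ↔ Merged (𝔾.abstr) (ℍ.abstr) q := by
  constructor
  · rintro ⟨u, k, hru, hlv⟩
    obtain ⟨m, hm⟩ := right_isSome_iota h𝔾 hru
    exact ⟨(k, m), k, abstr_right_of h𝔾 hm hru, abstr_left_of hv hlv⟩
  · rintro ⟨p, k, hAr, hBl⟩
    obtain ⟨u, hu⟩ := (exists_abstr_right h𝔾).1 ⟨p, hAr⟩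
    exact ⟨u, k, hu, left_of_abstr hv hBl⟩

/-- Image of a vertex of the composition, as vertex of the composition of abstractions. -/
def fmap (𝔾 : BIGraph r α) (ℍ : BIGraph r β) :
    α ⊕ β → Option ((Fin r × Mark) ⊕ (Fin r × Mark))
  | Sum.inl u => (𝔾.iota u).map Sum.inl
  | Sum.inr v => (ℍ.iota v).map Sum.inr

lemma fmap_inl {𝔾 : BIGraph r α} {ℍ : BIGraph r β} {u : α} :
    fmap 𝔾 ℍ (Sum.inl u) = (𝔾.iota u).map Sum.inl := rfl

lemma fmap_inr {𝔾 : BIGraph r α} {ℍ : BIGraph r β} {v : β} :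
    fmap 𝔾 ℍ (Sum.inr v) = (ℍ.iota v).map Sum.inr := rfl

lemma fmap_inj {𝔾 : BIGraph r α} {ℍ : BIGraph r β} (h𝔾 : 𝔾.Valid) (hℍ : ℍ.Valid)
    {a a' : α ⊕ β} {x : (Fin r × Mark) ⊕ (Fin r × Mark)}
    (h : fmap 𝔾 ℍ a = some x) (h' : fmap 𝔾 ℍ a' = some x) : a = a' := by
  rcases a with u | v <;> rcases a' with u' | v' <;>
    simp only [fmap_inl, fmap_inr, Option.map_eq_some_iff] at h h' <;>
    obtain ⟨p, hp, rfl⟩ := h <;> obtain ⟨p', hp', h2⟩ := h'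
  · cases Sum.inl.inj h2
    exact congrArg Sum.inl (iota_inj h𝔾 hp hp')
  · cases h2
  · cases h2
  · cases Sum.inr.inj h2
    exact congrArg Sum.inr (iota_inj hℍ hp hp')

/-- If a vertex of `𝔾` is not an interface vertex, it is not one in `𝔾·ℍ` either. -/
lemma comp_iota_inl_none {𝔾 : BIGraph r α} {ℍ : BIGraph r β} (hℍ : ℍ.Valid) {u : α}
    (h : 𝔾.iota u = none) : (𝔾.comp ℍ).iota (Sum.inl u) = none := by
  obtain ⟨hl, hr⟩ := iota_eq_none.1 h
  refine iota_eq_none.2 ⟨by rw [comp_left_inl]; exact hl, ?_⟩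
  rw [comp_right_inl hℍ, if_neg]
  rintro ⟨v, ⟨k, hk, -⟩, -⟩
  rw [hr] at hk
  cases hk

lemma comp_iota_inr_none {𝔾 : BIGraph r α} {ℍ : BIGraph r β} {v : β}
    (h : ℍ.iota v = none) : (𝔾.comp ℍ).iota (Sum.inr v) = none := by
  obtain ⟨hl, hr⟩ := iota_eq_none.1 h
  refine iota_eq_none.2 ⟨rfl, ?_⟩
  rw [comp_right_inr]
  split_ifs <;> simp [hr]

/-- iota-match, `inl` case. -/
lemma comp_iota_inl_match {𝔾 : BIGraph r α} {ℍ : BIGraph r β} (h𝔾 : 𝔾.Valid) (hℍ : ℍ.Valid)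
    {u : α} {p : Fin r × Mark} (hu : 𝔾.iota u = some p) :
    (𝔾.comp ℍ).iota (Sum.inl u) = ((𝔾.abstr).comp (ℍ.abstr)).iota (Sum.inl p) := by
  have hA := valid_abstr h𝔾
  have hB := valid_abstr hℍ
  obtain ⟨i, m⟩ := p
  cases m
  · -- L
    obtain ⟨hl, hr⟩ := iota_eq_L.1 hu
    have h1 : (𝔾.comp ℍ).left (Sum.inl u) = some i := by rw [comp_left_inl]; exact hl
    have h2 : (𝔾.comp ℍ).right (Sum.inl u) = none := by
      rw [comp_right_inl hℍ, if_neg]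
      rintro ⟨v, ⟨k, hk, -⟩, -⟩
      rw [hr] at hk; cases hk
    have h3 : ((𝔾.abstr).comp (ℍ.abstr)).left (Sum.inl (i, Mark.L)) = some i := by
      rw [comp_left_inl]; exact abstr_left_of hu hl
    have h4 : ((𝔾.abstr).comp (ℍ.abstr)).right (Sum.inl (i, Mark.L)) = none := by
      rw [comp_right_inl hB, if_neg]
      rintro ⟨q, ⟨k, hk, -⟩, -⟩
      rw [abstr_right_eq h𝔾, if_neg (by simp)] at hk
      cases hk
    rw [iota_eq_L.2 ⟨h1, h2⟩, (iota_eq_L.2 ⟨h3, h4⟩ : _ = some ((i, Mark.L) : Fin r × Mark))]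
  · -- R
    obtain ⟨hl, hr⟩ := iota_eq_R.1 hu
    have hAr : (𝔾.abstr).right (i, Mark.R) = some i := abstr_right_of h𝔾 hu hr
    have hAl : (𝔾.abstr).left (i, Mark.R) = none := by
      rw [abstr_left_eq, if_neg (by simp)]
    have h1 : (𝔾.comp ℍ).left (Sum.inl u) = none := by rw [comp_left_inl]; exact hl
    have h3 : ((𝔾.abstr).comp (ℍ.abstr)).left (Sum.inl (i, Mark.R)) = none := by
      rw [comp_left_inl]; exact hAl
    by_cases hEx : ∃ v, ℍ.left v = some i ∧ ∃ j, ℍ.right v = some j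
    · have h2 : (𝔾.comp ℍ).right (Sum.inl u) = some i := by
        obtain ⟨v, hvl, j, hvr⟩ := hEx
        rw [comp_right_inl hℍ, if_pos ⟨v, ⟨i, hr, hvl⟩, j, hvr⟩]
        exact hr
      have h4 : ((𝔾.abstr).comp (ℍ.abstr)).right (Sum.inl (i, Mark.R)) = some i := by
        obtain ⟨q, hql, j, hqr⟩ := (exists_hook hℍ).2 hEx
        rw [comp_right_inl hB, if_pos ⟨q, ⟨i, hAr, hql⟩, j, hqr⟩]
        exact hAr
      rw [iota_eq_R.2 ⟨h1, h2⟩, (iota_eq_R.2 ⟨h3, h4⟩ : _ = some ((i, Mark.R) : Fin r × Mark))]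
    · have h2 : (𝔾.comp ℍ).right (Sum.inl u) = none := by
        rw [comp_right_inl hℍ, if_neg]
        rintro ⟨v, ⟨k, hk, hlv⟩, j, hj⟩
        rw [hr] at hk
        cases Option.some.inj hk
        exact hEx ⟨v, hlv, j, hj⟩
      have h4 : ((𝔾.abstr).comp (ℍ.abstr)).right (Sum.inl (i, Mark.R)) = none := by
        rw [comp_right_inl hB, if_neg]
        rintro ⟨q, ⟨k, hk, hlq⟩, j, hj⟩
        rw [hAr] at hk
        cases Option.some.inj hk
        exact hEx ((exists_hook hℍ).1 ⟨q, hlq, j, hj⟩)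
      rw [iota_eq_none.2 ⟨h1, h2⟩, (iota_eq_none.2 ⟨h3, h4⟩ : _ = (none : Option (Fin r × Mark)))]
  · -- S
    obtain ⟨hl, j, hrj⟩ := iota_eq_S.1 hu
    cases h𝔾.2.2 u i j hl hrj
    have hAr : (𝔾.abstr).right (i, Mark.S) = some i := abstr_right_of h𝔾 hu hrj
    have hAl : (𝔾.abstr).left (i, Mark.S) = some i := abstr_left_of hu hl
    have h1 : (𝔾.comp ℍ).left (Sum.inl u) = some i := by rw [comp_left_inl]; exact hl
    have h3 : ((𝔾.abstr).comp (ℍ.abstr)).left (Sum.inl (i, Mark.S)) = some i := by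
      rw [comp_left_inl]; exact hAl
    by_cases hEx : ∃ v, ℍ.left v = some i ∧ ∃ j, ℍ.right v = some j
    · have h2 : (𝔾.comp ℍ).right (Sum.inl u) = some i := by
        obtain ⟨v, hvl, j', hvr⟩ := hEx
        rw [comp_right_inl hℍ, if_pos ⟨v, ⟨i, hrj, hvl⟩, j', hvr⟩]
        exact hrj
      have h4 : ((𝔾.abstr).comp (ℍ.abstr)).right (Sum.inl (i, Mark.S)) = some i := by
        obtain ⟨q, hql, j', hqr⟩ := (exists_hook hℍ).2 hEx
        rw [comp_right_inl hB, if_pos ⟨q, ⟨i, hAr, hql⟩, j', hqr⟩]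
        exact hAr
      rw [iota_eq_S.2 ⟨h1, i, h2⟩, (iota_eq_S.2 ⟨h3, i, h4⟩ :
        _ = some ((i, Mark.S) : Fin r × Mark))]
    · have h2 : (𝔾.comp ℍ).right (Sum.inl u) = none := by
        rw [comp_right_inl hℍ, if_neg]
        rintro ⟨v, ⟨k, hk, hlv⟩, j', hj⟩
        rw [hrj] at hk
        cases Option.some.inj hk
        exact hEx ⟨v, hlv, j', hj⟩
      have h4 : ((𝔾.abstr).comp (ℍ.abstr)).right (Sum.inl (i, Mark.S)) = none := by
        rw [comp_right_inl hB, if_neg]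
        rintro ⟨q, ⟨k, hk, hlq⟩, j', hj⟩
        rw [hAr] at hk
        cases Option.some.inj hk
        exact hEx ((exists_hook hℍ).1 ⟨q, hlq, j', hj⟩)
      rw [iota_eq_L.2 ⟨h1, h2⟩, (iota_eq_L.2 ⟨h3, h4⟩ : _ = some ((i, Mark.L) : Fin r × Mark))]

/-- iota-match, `inr` case. -/
lemma comp_iota_inr_match {𝔾 : BIGraph r α} {ℍ : BIGraph r β} (h𝔾 : 𝔾.Valid) (hℍ : ℍ.Valid)
    {v : β} {q : Fin r × Mark} (hv : ℍ.iota v = some q) :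
    (𝔾.comp ℍ).iota (Sum.inr v) = ((𝔾.abstr).comp (ℍ.abstr)).iota (Sum.inr q) := by
  have hB := valid_abstr hℍ
  have h1 : (𝔾.comp ℍ).left (Sum.inr v) = none := rfl
  have h3 : ((𝔾.abstr).comp (ℍ.abstr)).left (Sum.inr q) = none := rfl
  by_cases hM : Merged 𝔾 ℍ v
  · have h2 : (𝔾.comp ℍ).right (Sum.inr v) = none := by
      rw [comp_right_inr, if_pos hM]
    have h4 : ((𝔾.abstr).comp (ℍ.abstr)).right (Sum.inr q) = none := by
      rw [comp_right_inr, if_pos ((merged_match h𝔾 hℍ hv).1 hM)]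
    rw [iota_eq_none.2 ⟨h1, h2⟩, (iota_eq_none.2 ⟨h3, h4⟩ : _ = (none : Option (Fin r × Mark)))]
  · have h2 : (𝔾.comp ℍ).right (Sum.inr v) = ℍ.right v := by
      rw [comp_right_inr, if_neg hM]
    have h4 : ((𝔾.abstr).comp (ℍ.abstr)).right (Sum.inr q) = (ℍ.abstr).right q := by
      rw [comp_right_inr, if_neg (fun h => hM ((merged_match h𝔾 hℍ hv).2 h))]
    cases hr : ℍ.right v with
    | none =>
      have hBr : (ℍ.abstr).right q = none := by
        rw [abstr_right_eq hℍ]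
        rw [if_neg]
        rintro ⟨hm, v', hv'⟩
        cases iota_inj hℍ hv hv'
        rw [right_of_iota hℍ hv hm] at hr
        cases hr
      rw [iota_eq_none.2 ⟨h1, h2.trans hr⟩,
        (iota_eq_none.2 ⟨h3, h4.trans hBr⟩ : _ = (none : Option (Fin r × Mark)))]
    | some j =>
      obtain ⟨hj, hm⟩ := mark_of_right hℍ hv hr
      have hBr : (ℍ.abstr).right q = some j := abstr_right_of hℍ hv hr
      rw [iota_eq_R.2 ⟨h1, h2.trans hr⟩,
        (iota_eq_R.2 ⟨h3, h4.trans hBr⟩ : _ = some ((j, Mark.R) : Fin r × Mark))]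

end Aux3

end BIGraph

namespace BIGraph

section Aux4

variable {r : ℕ} {α β : Type*}

lemma comp_iota_inl_some {𝔾 : BIGraph r α} {ℍ : BIGraph r β} (hℍ : ℍ.Valid)
    {u : α} {p : Fin r × Mark} (h : (𝔾.comp ℍ).iota (Sum.inl u) = some p) :
    ∃ p', 𝔾.iota u = some p' := by
  cases hg : 𝔾.iota u with
  | none => rw [comp_iota_inl_none hℍ hg] at h; cases h
  | some p' => exact ⟨p', rfl⟩

lemma comp_iota_inr_some {𝔾 : BIGraph r α} {ℍ : BIGraph r β}
    {v : β} {p : Fin r × Mark} (h : (𝔾.comp ℍ).iota (Sum.inr v) = some p) :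
    ∃ q, ℍ.iota v = some q := by
  cases hg : ℍ.iota v with
  | none => rw [comp_iota_inr_none hg] at h; cases h
  | some q => exact ⟨q, rfl⟩

lemma abstr_iota_some {𝔾 : BIGraph r α} (h𝔾 : 𝔾.Valid) {p' p'' : Fin r × Mark}
    (h : (𝔾.abstr).iota p' = some p'') : ∃ u, 𝔾.iota u = some p' := by
  obtain ⟨i, m⟩ := p''
  cases m
  · have hL := (iota_eq_L.1 h).1
    rw [abstr_left_eq] at hL
    split_ifs at hL with h1
    exact h1.2
  · have hR := (iota_eq_R.1 h).2
    rw [abstr_right_eq h𝔾] at hR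
    split_ifs at hR with h1
    exact h1.2
  · have hL := (iota_eq_S.1 h).1
    rw [abstr_left_eq] at hL
    split_ifs at hL with h1
    exact h1.2

lemma comp_iota_exists_iff {𝔾 : BIGraph r α} {ℍ : BIGraph r β}
    (h𝔾 : 𝔾.Valid) (hℍ : ℍ.Valid) (p : Fin r × Mark) :
    (∃ a, (𝔾.comp ℍ).iota a = some p) ↔
      (∃ x, ((𝔾.abstr).comp (ℍ.abstr)).iota x = some p) := by
  constructor
  · rintro ⟨u | v, ha⟩
    · obtain ⟨p', hp'⟩ := comp_iota_inl_some hℍ ha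
      exact ⟨Sum.inl p', by rw [← comp_iota_inl_match h𝔾 hℍ hp']; exact ha⟩
    · obtain ⟨q, hq⟩ := comp_iota_inr_some ha
      exact ⟨Sum.inr q, by rw [← comp_iota_inr_match h𝔾 hℍ hq]; exact ha⟩
  · rintro ⟨p' | q, hx⟩
    · obtain ⟨p'', hp''⟩ := comp_iota_inl_some (valid_abstr hℍ) hx
      obtain ⟨u, hu⟩ := abstr_iota_some h𝔾 hp''
      exact ⟨Sum.inl u, by rw [comp_iota_inl_match h𝔾 hℍ hu]; exact hx⟩
    · obtain ⟨q'', hq''⟩ := comp_iota_inr_some hx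
      obtain ⟨v, hv⟩ := abstr_iota_some hℍ hq''
      exact ⟨Sum.inr v, by rw [comp_iota_inr_match h𝔾 hℍ hv]; exact hx⟩

lemma final_left {𝔾 : BIGraph r α} {ℍ : BIGraph r β} (h𝔾 : 𝔾.Valid) (hℍ : ℍ.Valid) :
    ((𝔾.comp ℍ).abstr).left = (((𝔾.abstr).comp (ℍ.abstr)).abstr).left := by
  classical
  funext p
  rw [abstr_left_eq, abstr_left_eq]
  exact if_congr (and_congr_right fun _ => comp_iota_exists_iff h𝔾 hℍ p) rfl rfl

lemma final_right {𝔾 : BIGraph r α} {ℍ : BIGraph r β} (h𝔾 : 𝔾.Valid) (hℍ : ℍ.Valid) :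
    ((𝔾.comp ℍ).abstr).right = (((𝔾.abstr).comp (ℍ.abstr)).abstr).right := by
  classical
  funext p
  rw [abstr_right_eq (valid_comp h𝔾 hℍ),
    abstr_right_eq (valid_comp (valid_abstr h𝔾) (valid_abstr hℍ))]
  exact if_congr (and_congr_right fun _ => comp_iota_exists_iff h𝔾 hℍ p) rfl rfl

end Aux4

end BIGraph

namespace BIGraph

section Aux5

variable {r : ℕ} {α β : Type*}

lemma not_merged_of_iota_none {𝔾 : BIGraph r α} {ℍ : BIGraph r β} {v : β}
    (h : ℍ.iota v = none) : ¬ Merged 𝔾 ℍ v := by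
  rintro ⟨u, k, -, hlv⟩
  rw [(iota_eq_none.1 h).1] at hlv
  cases hlv

lemma ident_left_iota {𝔾 : BIGraph r α} {ℍ : BIGraph r β} {u : α} {v : β}
    (h : Ident 𝔾 ℍ u v) : ∃ q, ℍ.iota v = some q := by
  obtain ⟨k, -, hlv⟩ := h
  obtain ⟨m, hm⟩ := left_isSome_iota hlv
  exact ⟨(k, m), hm⟩

lemma ident_right_iota {𝔾 : BIGraph r α} {ℍ : BIGraph r β} (h𝔾 : 𝔾.Valid) {u : α} {v : β}
    (h : Ident 𝔾 ℍ u v) : ∃ p, 𝔾.iota u = some p := by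
  obtain ⟨k, hru, -⟩ := h
  obtain ⟨m, hm⟩ := right_isSome_iota h𝔾 hru
  exact ⟨(k, m), hm⟩

lemma abstr_adj_of_walk {𝔾 : BIGraph r α} {u u' : α} {p p' : Fin r × Mark}
    (hu : 𝔾.iota u = some p) (hu' : 𝔾.iota u' = some p') (hne : p ≠ p')
    (w : 𝔾.graph.Walk u u') (hw : ∀ z ∈ w.support, z ≠ u → z ≠ u' → 𝔾.iota z = none) :
    (𝔾.abstr).graph.Adj p p' :=
  ⟨hne, u, u', hu, hu', w, hw⟩

lemma abstr_adj_single {𝔾 : BIGraph r α} (h𝔾 : 𝔾.Valid) {u u' : α} {p p' : Fin r × Mark}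
    (hu : 𝔾.iota u = some p) (hu' : 𝔾.iota u' = some p') (h : 𝔾.graph.Adj u u') :
    (𝔾.abstr).graph.Adj p p' := by
  refine abstr_adj_of_walk hu hu' (fun e => h.ne (iota_inj h𝔾 hu (e ▸ hu')))
    (SimpleGraph.Walk.cons h SimpleGraph.Walk.nil) ?_
  intro z hz h1 h2
  simp only [SimpleGraph.Walk.support_cons, SimpleGraph.Walk.support_nil,
    List.mem_cons, List.mem_singleton] at hz
  rcases hz with rfl | rfl | h3
  · exact absurd rfl h1
  · exact absurd rfl h2
  · cases h3

lemma ident_abstr {𝔾 : BIGraph r α} {ℍ : BIGraph r β} (h𝔾 : 𝔾.Valid)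
    {u : α} {v : β} {p q : Fin r × Mark}
    (hu : 𝔾.iota u = some p) (hv : ℍ.iota v = some q) (hid : Ident 𝔾 ℍ u v) :
    Ident (𝔾.abstr) (ℍ.abstr) p q := by
  obtain ⟨k, h1, h2⟩ := hid
  exact ⟨k, abstr_right_of h𝔾 hu h1, abstr_left_of hv h2⟩

lemma ident_of_abstr {𝔾 : BIGraph r α} {ℍ : BIGraph r β} (h𝔾 : 𝔾.Valid)
    {u : α} {v : β} {p q : Fin r × Mark}
    (hu : 𝔾.iota u = some p) (hv : ℍ.iota v = some q)
    (hid : Ident (𝔾.abstr) (ℍ.abstr) p q) : Ident 𝔾 ℍ u v := by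
  obtain ⟨k, h1, h2⟩ := hid
  exact ⟨k, right_of_abstr h𝔾 hu h1, left_of_abstr hv h2⟩

lemma comp_iota_fmap {𝔾 : BIGraph r α} {ℍ : BIGraph r β} (h𝔾 : 𝔾.Valid) (hℍ : ℍ.Valid)
    {a : α ⊕ β} {x : (Fin r × Mark) ⊕ (Fin r × Mark)} (h : fmap 𝔾 ℍ a = some x) :
    ((𝔾.abstr).comp (ℍ.abstr)).iota x = (𝔾.comp ℍ).iota a := by
  rcases a with u | v
  · obtain ⟨p, hp, rfl⟩ := Option.map_eq_some_iff.1 h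
    exact (comp_iota_inl_match h𝔾 hℍ hp).symm
  · obtain ⟨q, hq, rfl⟩ := Option.map_eq_some_iff.1 h
    exact (comp_iota_inr_match h𝔾 hℍ hq).symm

lemma fmap_some_of_comp_iota {𝔾 : BIGraph r α} {ℍ : BIGraph r β}
    (h𝔾 : 𝔾.Valid) (hℍ : ℍ.Valid) {a : α ⊕ β} {p : Fin r × Mark}
    (h : (𝔾.comp ℍ).iota a = some p) :
    ∃ x, fmap 𝔾 ℍ a = some x ∧ ((𝔾.abstr).comp (ℍ.abstr)).iota x = some p := by
  rcases a with u | v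
  · obtain ⟨p', hp'⟩ := comp_iota_inl_some hℍ h
    refine ⟨Sum.inl p', by rw [fmap_inl, hp']; rfl, ?_⟩
    rw [← comp_iota_inl_match h𝔾 hℍ hp']
    exact h
  · obtain ⟨q, hq⟩ := comp_iota_inr_some h
    refine ⟨Sum.inr q, by rw [fmap_inr, hq]; rfl, ?_⟩
    rw [← comp_iota_inr_match h𝔾 hℍ hq]
    exact h

/-- Single-edge simulation: an edge of `𝔾·ℍ` between two interface-relevant vertices
maps to an edge of `⌈𝔾⌉·⌈ℍ⌉`. -/
lemma edge_fwd {𝔾 : BIGraph r α} {ℍ : BIGraph r β} (h𝔾 : 𝔾.Valid) (hℍ : ℍ.Valid)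
    {a c : α ⊕ β} {x xc : (Fin r × Mark) ⊕ (Fin r × Mark)}
    (h : (𝔾.comp ℍ).graph.Adj a c) (ha : fmap 𝔾 ℍ a = some x)
    (hc : fmap 𝔾 ℍ c = some xc) :
    ((𝔾.abstr).comp (ℍ.abstr)).graph.Adj x xc := by
  rcases a with u | v <;> rcases c with u' | v'
  · obtain ⟨p, hp, rfl⟩ := Option.map_eq_some_iff.1 ha
    obtain ⟨p', hp', rfl⟩ := Option.map_eq_some_iff.1 hc
    obtain ⟨hne, hG | ⟨v, v', hvv, hid1, hid2⟩⟩ := comp_adj_inl_inl.1 h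
    · exact comp_adj_inl_inl.2 ⟨fun e => hne (iota_inj h𝔾 hp (e ▸ hp')),
        Or.inl (abstr_adj_single h𝔾 hp hp' hG)⟩
    · obtain ⟨q, hq⟩ := ident_left_iota hid1
      obtain ⟨q', hq'⟩ := ident_left_iota hid2
      exact comp_adj_inl_inl.2 ⟨fun e => hne (iota_inj h𝔾 hp (e ▸ hp')),
        Or.inr ⟨q, q', abstr_adj_single hℍ hq hq' hvv,
          ident_abstr h𝔾 hp hq hid1, ident_abstr h𝔾 hp' hq' hid2⟩⟩
  · obtain ⟨p, hp, rfl⟩ := Option.map_eq_some_iff.1 ha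
    obtain ⟨q', hq', rfl⟩ := Option.map_eq_some_iff.1 hc
    obtain ⟨hnm, v, hvv, hid⟩ := comp_adj_inl_inr.1 h
    obtain ⟨q, hq⟩ := ident_left_iota hid
    exact comp_adj_inl_inr.2 ⟨fun hm => hnm ((merged_match h𝔾 hℍ hq').2 hm),
      q, abstr_adj_single hℍ hq hq' hvv, ident_abstr h𝔾 hp hq hid⟩
  · obtain ⟨q, hq, rfl⟩ := Option.map_eq_some_iff.1 ha
    obtain ⟨p', hp', rfl⟩ := Option.map_eq_some_iff.1 hc
    obtain ⟨hnm, v', hvv, hid⟩ := comp_adj_inr_inl.1 h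
    obtain ⟨q', hq'⟩ := ident_left_iota hid
    exact comp_adj_inr_inl.2 ⟨fun hm => hnm ((merged_match h𝔾 hℍ hq).2 hm),
      q', abstr_adj_single hℍ hq' hq hvv, ident_abstr h𝔾 hp' hq' hid⟩
  · obtain ⟨q, hq, rfl⟩ := Option.map_eq_some_iff.1 ha
    obtain ⟨q', hq', rfl⟩ := Option.map_eq_some_iff.1 hc
    obtain ⟨hnm, hnm', hvv⟩ := comp_adj_inr_inr.1 h
    exact comp_adj_inr_inr.2 ⟨fun hm => hnm ((merged_match h𝔾 hℍ hq).2 hm),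
      fun hm => hnm' ((merged_match h𝔾 hℍ hq').2 hm),
      abstr_adj_single hℍ hq hq' hvv⟩

/-- Startpoint data for a pending `ℍ`-segment of a walk in `𝔾·ℍ`. -/
def startRep (𝔾 : BIGraph r α) (ℍ : BIGraph r β)
    (x : (Fin r × Mark) ⊕ (Fin r × Mark)) (v₀ : β) : Prop :=
  (∃ u₁ p, x = Sum.inl p ∧ 𝔾.iota u₁ = some p ∧ Ident 𝔾 ℍ u₁ v₀) ∨
  (∃ q, x = Sum.inr q ∧ ℍ.iota v₀ = some q ∧ ¬ Merged 𝔾 ℍ v₀)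

/-- State invariant for the forward walk simulation. -/
def st (𝔾 : BIGraph r α) (ℍ : BIGraph r β)
    (x : (Fin r × Mark) ⊕ (Fin r × Mark)) (c : α ⊕ β) : Prop :=
  fmap 𝔾 ℍ c = some x ∨
  (∃ u₀ u, c = Sum.inl u ∧ 𝔾.iota u = none ∧ fmap 𝔾 ℍ (Sum.inl u₀) = some x ∧
    ∃ wg : 𝔾.graph.Walk u₀ u, ∀ z ∈ wg.support, z ≠ u₀ → 𝔾.iota z = none) ∨
  (∃ v₀ v, c = Sum.inr v ∧ ℍ.iota v = none ∧ startRep 𝔾 ℍ x v₀ ∧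
    ∃ wh : ℍ.graph.Walk v₀ v, ∀ z ∈ wh.support, z ≠ v₀ → ℍ.iota z = none)

/-- Extending the state along an edge into a non-interface vertex. -/
lemma step_st {𝔾 : BIGraph r α} {ℍ : BIGraph r β}
    {x : (Fin r × Mark) ⊕ (Fin r × Mark)} {c c' : α ⊕ β}
    (hst : st 𝔾 ℍ x c) (hadj : (𝔾.comp ℍ).graph.Adj c c')
    (hnone : fmap 𝔾 ℍ c' = none) : st 𝔾 ℍ x c' := by
  rcases c' with u'' | v''
  · -- c' = inl u'', a non-interface 𝔾-vertex
    have hgu'' : 𝔾.iota u'' = none := Option.map_eq_none_iff.1 hnone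
    have hnoid : ∀ v : β, ¬ Ident 𝔾 ℍ u'' v := by
      rintro v ⟨k, hru, -⟩
      rw [(iota_eq_none.1 hgu'').2] at hru
      cases hru
    rcases c with u | v
    · obtain ⟨hne, hG | ⟨v, v', hvv, hid1, hid2⟩⟩ := comp_adj_inl_inl.1 hadj
      · rcases hst with h0 | ⟨u₀, u₁, heq, hn, hx, wg, hwg⟩ | ⟨v₀, v₁, heq, _, _, _⟩
        · refine Or.inr (Or.inl ⟨u, u'', rfl, hgu'', h0,
            SimpleGraph.Walk.cons hG SimpleGraph.Walk.nil, ?_⟩)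
          intro z hz h1
          simp only [SimpleGraph.Walk.support_cons, SimpleGraph.Walk.support_nil,
            List.mem_cons, List.mem_singleton] at hz
          rcases hz with rfl | rfl | h3
          · exact absurd rfl h1
          · exact hgu''
          · cases h3
        · cases Sum.inl.inj heq
          refine Or.inr (Or.inl ⟨u₀, u'', rfl, hgu'', hx, wg.concat hG, ?_⟩)
          intro z hz h1
          rw [SimpleGraph.Walk.support_concat, List.mem_append,
            List.mem_singleton] at hz
          rcases hz with hz | rfl
          · exact hwg z hz h1
          · exact hgu''
        · cases heq
      · exact absurd hid2 (hnoid v')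
    · obtain ⟨-, v', hvv, hid⟩ := comp_adj_inr_inl.1 hadj
      exact absurd hid (hnoid v')
  · -- c' = inr v'', a non-interface ℍ-vertex
    have hhv'' : ℍ.iota v'' = none := Option.map_eq_none_iff.1 hnone
    rcases c with u | v
    · obtain ⟨hnm, v, hvv, hid⟩ := comp_adj_inl_inr.1 hadj
      rcases hst with h0 | ⟨u₀, u₁, heq, hn, hx, wg, hwg⟩ | ⟨v₀, v₁, heq, _, _, _⟩
      · obtain ⟨p, hp, rfl⟩ := Option.map_eq_some_iff.1 h0
        refine Or.inr (Or.inr ⟨v, v'', rfl, hhv'', Or.inl ⟨u, p, rfl, hp, hid⟩,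
          SimpleGraph.Walk.cons hvv SimpleGraph.Walk.nil, ?_⟩)
        intro z hz h1
        simp only [SimpleGraph.Walk.support_cons, SimpleGraph.Walk.support_nil,
          List.mem_cons, List.mem_singleton] at hz
        rcases hz with rfl | rfl | h3
        · exact absurd rfl h1
        · exact hhv''
        · cases h3
      · cases Sum.inl.inj heq
        obtain ⟨k, hru, -⟩ := hid
        rw [(iota_eq_none.1 hn).2] at hru
        cases hru
      · cases heq
    · obtain ⟨hnm, hnm'', hvv⟩ := comp_adj_inr_inr.1 hadj
      rcases hst with h0 | ⟨u₀, u₁, heq, _, _, _⟩ | ⟨v₀, v₁, heq, hn, hsr, wh, hwh⟩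
      · obtain ⟨q, hq, rfl⟩ := Option.map_eq_some_iff.1 h0
        refine Or.inr (Or.inr ⟨v, v'', rfl, hhv'', Or.inr ⟨q, rfl, hq, hnm⟩,
          SimpleGraph.Walk.cons hvv SimpleGraph.Walk.nil, ?_⟩)
        intro z hz h1
        simp only [SimpleGraph.Walk.support_cons, SimpleGraph.Walk.support_nil,
          List.mem_cons, List.mem_singleton] at hz
        rcases hz with rfl | rfl | h3
        · exact absurd rfl h1
        · exact hhv''
        · cases h3
      · cases heq
      · cases Sum.inr.inj heq
        refine Or.inr (Or.inr ⟨v₀, v'', rfl, hhv'', hsr, wh.concat hvv, ?_⟩)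
        intro z hz h1
        rw [SimpleGraph.Walk.support_concat, List.mem_append,
          List.mem_singleton] at hz
        rcases hz with hz | rfl
        · exact hwh z hz h1
        · exact hhv''

/-- Closing a pending segment at the next interface-relevant vertex. -/
lemma close_fwd {𝔾 : BIGraph r α} {ℍ : BIGraph r β} (h𝔾 : 𝔾.Valid) (hℍ : ℍ.Valid)
    {x xd : (Fin r × Mark) ⊕ (Fin r × Mark)} {c d : α ⊕ β}
    (hst : st 𝔾 ℍ x c) (hadj : (𝔾.comp ℍ).graph.Adj c d)
    (hd : fmap 𝔾 ℍ d = some xd) (hne : x ≠ xd) :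
    ((𝔾.abstr).comp (ℍ.abstr)).graph.Adj x xd := by
  rcases hst with h0 | ⟨u₀, u, heq, hn, hx, wg, hwg⟩ | ⟨v₀, v, heq, hn, hsr, wh, hwh⟩
  · exact edge_fwd h𝔾 hℍ hadj h0 hd
  · -- closing a 𝔾-segment
    subst heq
    rcases d with u' | v'
    · obtain ⟨p₀, hp₀, rfl⟩ := Option.map_eq_some_iff.1 hx
      obtain ⟨p', hp', rfl⟩ := Option.map_eq_some_iff.1 hd
      obtain ⟨hne', hG | ⟨v, v', hvv, hid1, hid2⟩⟩ := comp_adj_inl_inl.1 hadj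
      · refine comp_adj_inl_inl.2 ⟨fun e => hne (congrArg Sum.inl e), Or.inl ?_⟩
        refine abstr_adj_of_walk hp₀ hp' (fun e => hne (congrArg Sum.inl e))
          (wg.concat hG) ?_
        intro z hz h1 h2
        rw [SimpleGraph.Walk.support_concat, List.mem_append,
          List.mem_singleton] at hz
        rcases hz with hz | rfl
        · exact hwg z hz h1
        · exact absurd rfl h2
      · obtain ⟨k, hru, -⟩ := hid1
        rw [(iota_eq_none.1 hn).2] at hru
        cases hru
    · obtain ⟨hnm, v, hvv, hid⟩ := comp_adj_inl_inr.1 hadj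
      obtain ⟨k, hru, -⟩ := hid
      rw [(iota_eq_none.1 hn).2] at hru
      cases hru
  · -- closing an ℍ-segment
    subst heq
    rcases d with u' | v_d
    · obtain ⟨p', hp', rfl⟩ := Option.map_eq_some_iff.1 hd
      obtain ⟨hnmv, v', hv'v, hid'⟩ := comp_adj_inr_inl.1 hadj
      obtain ⟨q', hq'⟩ := ident_left_iota hid'
      have hcond : ∀ z ∈ (wh.concat hv'v.symm).support, z ≠ v₀ → z ≠ v' → ℍ.iota z = none := by
        intro z hz h1 h2
        rw [SimpleGraph.Walk.support_concat, List.mem_append,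
          List.mem_singleton] at hz
        rcases hz with hz | rfl
        · exact hwh z hz h1
        · exact absurd rfl h2
      rcases hsr with ⟨u₁, p₁, rfl, hu₁, hid₁⟩ | ⟨q₀, rfl, hv₀, hnm₀⟩
      · obtain ⟨q₀, hq₀⟩ := ident_left_iota hid₁
        have hp₁p' : p₁ ≠ p' := fun e => hne (congrArg Sum.inl e)
        have hv₀v' : v₀ ≠ v' := by
          rintro rfl
          obtain ⟨k, hr1, hl1⟩ := hid₁
          obtain ⟨k', hr2, hl2⟩ := hid'
          rw [hl1] at hl2
          cases Option.some.inj hl2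
          have e := h𝔾.2.1 u₁ u' k hr1 hr2
          rw [e, hp'] at hu₁
          exact hp₁p' (Option.some.inj hu₁).symm
        have hq₀q' : q₀ ≠ q' := fun e => hv₀v' (iota_inj hℍ hq₀ (e ▸ hq'))
        exact comp_adj_inl_inl.2 ⟨hp₁p', Or.inr ⟨q₀, q',
          abstr_adj_of_walk hq₀ hq' hq₀q' _ hcond,
          ident_abstr h𝔾 hu₁ hq₀ hid₁, ident_abstr h𝔾 hp' hq' hid'⟩⟩
      · have hv₀v' : v₀ ≠ v' := by
          rintro rfl
          exact hnm₀ ⟨u', hid'⟩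
        have hq₀q' : q₀ ≠ q' := fun e => hv₀v' (iota_inj hℍ hv₀ (e ▸ hq'))
        exact comp_adj_inr_inl.2 ⟨fun hm => hnm₀ ((merged_match h𝔾 hℍ hv₀).2 hm),
          q', (abstr_adj_of_walk hv₀ hq' hq₀q' _ hcond).symm,
          ident_abstr h𝔾 hp' hq' hid'⟩
    · obtain ⟨q_d, hq_d, rfl⟩ := Option.map_eq_some_iff.1 hd
      obtain ⟨hnmv, hnmd, hvv⟩ := comp_adj_inr_inr.1 hadj
      have hcond : ∀ z ∈ (wh.concat hvv).support, z ≠ v₀ → z ≠ v_d → ℍ.iota z = none := by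
        intro z hz h1 h2
        rw [SimpleGraph.Walk.support_concat, List.mem_append,
          List.mem_singleton] at hz
        rcases hz with hz | rfl
        · exact hwh z hz h1
        · exact absurd rfl h2
      rcases hsr with ⟨u₁, p₁, rfl, hu₁, hid₁⟩ | ⟨q₀, rfl, hv₀, hnm₀⟩
      · obtain ⟨q₀, hq₀⟩ := ident_left_iota hid₁
        have hv₀vd : v₀ ≠ v_d := by
          rintro rfl
          exact hnmd ⟨u₁, hid₁⟩
        have hq₀qd : q₀ ≠ q_d := fun e => hv₀vd (iota_inj hℍ hq₀ (e ▸ hq_d))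
        exact comp_adj_inl_inr.2 ⟨fun hm => hnmd ((merged_match h𝔾 hℍ hq_d).2 hm),
          q₀, abstr_adj_of_walk hq₀ hq_d hq₀qd _ hcond,
          ident_abstr h𝔾 hu₁ hq₀ hid₁⟩
      · have hq₀qd : q₀ ≠ q_d := fun e => hne (congrArg Sum.inr e)
        exact comp_adj_inr_inr.2 ⟨fun hm => hnm₀ ((merged_match h𝔾 hℍ hv₀).2 hm),
          fun hm => hnmd ((merged_match h𝔾 hℍ hq_d).2 hm),
          abstr_adj_of_walk hv₀ hq_d hq₀qd _ hcond⟩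

end Aux5

end BIGraph

namespace BIGraph

section Aux6

variable {r : ℕ} {α β : Type*}

lemma aux_fwd {𝔾 : BIGraph r α} {ℍ : BIGraph r β} (h𝔾 : 𝔾.Valid) (hℍ : ℍ.Valid)
    {b : α ⊕ β} {y : (Fin r × Mark) ⊕ (Fin r × Mark)} (hb : fmap 𝔾 ℍ b = some y)
    {c : α ⊕ β} (w : (𝔾.comp ℍ).graph.Walk c b) :
    w.IsPath →
    (∀ z ∈ w.support, z ≠ c → z ≠ b → (𝔾.comp ℍ).iota z = none) →
    ∀ x : (Fin r × Mark) ⊕ (Fin r × Mark), st 𝔾 ℍ x c →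
    (∀ z ∈ w.support, fmap 𝔾 ℍ z = some x → z = c) →
    ∃ w' : ((𝔾.abstr).comp (ℍ.abstr)).graph.Walk x y,
      ∀ z ∈ w'.support, z ≠ x → z ≠ y →
        ((𝔾.abstr).comp (ℍ.abstr)).iota z = none := by
  induction w with
  | nil =>
    intro _ _ x hst _
    rcases hst with h0 | ⟨u₀, u, heq, hn, -, -⟩ | ⟨v₀, v, heq, hn, -, -⟩
    · rw [hb] at h0
      cases Option.some.inj h0
      refine ⟨SimpleGraph.Walk.nil, ?_⟩
      intro z hz h1 _
      simp only [SimpleGraph.Walk.support_nil, List.mem_singleton] at hz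
      exact absurd hz h1
    · subst heq
      rw [fmap_inl, hn] at hb
      cases hb
    · subst heq
      rw [fmap_inr, hn] at hb
      cases hb
  | @cons c c'' b hadj w ih =>
    intro hp hint x hst hfr
    rw [SimpleGraph.Walk.cons_isPath_iff] at hp
    obtain ⟨hp', hcnotin⟩ := hp
    have hc''mem : c'' ∈ w.support := SimpleGraph.Walk.start_mem_support w
    have hc''ne : c'' ≠ c := fun e => hcnotin (e ▸ hc''mem)
    have hint' : ∀ z ∈ w.support, z ≠ c'' → z ≠ b → (𝔾.comp ℍ).iota z = none := by
      intro z hz h1 h2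
      refine hint z (by rw [SimpleGraph.Walk.support_cons]; exact List.mem_cons_of_mem _ hz) (fun e => hcnotin (e ▸ hz)) h2
    cases hfc : fmap 𝔾 ℍ c'' with
    | none =>
      have hst' : st 𝔾 ℍ x c'' := step_st hst hadj hfc
      have hfr' : ∀ z ∈ w.support, fmap 𝔾 ℍ z = some x → z = c'' := by
        intro z hz hfz
        exact absurd ((hfr z (by rw [SimpleGraph.Walk.support_cons]; exact List.mem_cons_of_mem _ hz) hfz) ▸ hz) hcnotin
      exact ih hb hp' hint' x hst' hfr'
    | some xc =>
      have hxc : x ≠ xc := by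
        intro e
        subst e
        exact hc''ne (hfr c'' (by rw [SimpleGraph.Walk.support_cons]; exact List.mem_cons_of_mem _ hc''mem) hfc)
      have hAB := close_fwd h𝔾 hℍ hst hadj hfc hxc
      have hfr' : ∀ z ∈ w.support, fmap 𝔾 ℍ z = some xc → z = c'' := by
        intro z hz hfz
        exact fmap_inj h𝔾 hℍ hfz hfc
      obtain ⟨w', hw'⟩ := ih hb hp' hint' xc (Or.inl hfc) hfr'
      refine ⟨SimpleGraph.Walk.cons hAB w', ?_⟩
      intro z hz h1 h2
      rw [SimpleGraph.Walk.support_cons] at hz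
      rcases List.mem_cons.1 hz with rfl | hz'
      · exact absurd rfl h1
      · by_cases hzc : z = xc
        · subst hzc
          by_cases hcb : c'' = b
          · subst hcb
            rw [hb] at hfc
            exact absurd (Option.some.inj hfc).symm h2
          · rw [comp_iota_fmap h𝔾 hℍ hfc]
            exact hint c'' (by rw [SimpleGraph.Walk.support_cons]; exact List.mem_cons_of_mem _ hc''mem) hc''ne hcb
        · exact hw' z hz' hzc h2

lemma adj_fwd {𝔾 : BIGraph r α} {ℍ : BIGraph r β} (h𝔾 : 𝔾.Valid) (hℍ : ℍ.Valid)
    {p q : Fin r × Mark} (h : ((𝔾.comp ℍ).abstr).graph.Adj p q) :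
    ((((𝔾.abstr).comp (ℍ.abstr))).abstr).graph.Adj p q := by
  classical
  obtain ⟨hpq, a, b, ha, hb, w, hw⟩ := (abstr_adj _).1 h
  obtain ⟨x, hfa, hx⟩ := fmap_some_of_comp_iota h𝔾 hℍ ha
  obtain ⟨y, hfb, hy⟩ := fmap_some_of_comp_iota h𝔾 hℍ hb
  have hp2 : w.bypass.IsPath := SimpleGraph.Walk.bypass_isPath w
  have hw2 : ∀ z ∈ w.bypass.support, z ≠ a → z ≠ b → (𝔾.comp ℍ).iota z = none :=
    fun z hz => hw z (SimpleGraph.Walk.support_bypass_subset w hz)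
  refine (abstr_adj _).2 ⟨hpq, x, y, hx, hy, ?_⟩
  clear hw h
  cases hwb : w.bypass with
  | nil =>
    rw [hwb] at hp2 hw2
    exfalso
    rw [ha] at hb
    exact hpq (Option.some.inj hb)
  | @cons _ c _ hadj w₂ =>
    rw [hwb] at hp2 hw2
    clear hwb
    rw [SimpleGraph.Walk.cons_isPath_iff] at hp2
    obtain ⟨hp₂, hanotin⟩ := hp2
    have hcmem : c ∈ w₂.support := SimpleGraph.Walk.start_mem_support w₂
    have hac : a ≠ c := fun e => hanotin (e ▸ hcmem)
    have hint : ∀ z ∈ w₂.support, z ≠ c → z ≠ b → (𝔾.comp ℍ).iota z = none := by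
      intro z hz h1 h2
      exact hw2 z (by rw [SimpleGraph.Walk.support_cons]; exact List.mem_cons_of_mem _ hz) (fun e => hanotin (e ▸ hz)) h2
    cases hfc : fmap 𝔾 ℍ c with
    | none =>
      have hst : st 𝔾 ℍ x c := step_st (Or.inl hfa) hadj hfc
      have hfr : ∀ z ∈ w₂.support, fmap 𝔾 ℍ z = some x → z = c := by
        intro z hz hfz
        exact absurd ((fmap_inj h𝔾 hℍ hfz hfa) ▸ hz) hanotin
      exact aux_fwd h𝔾 hℍ hfb w₂ hp₂ hint x hst hfr
    | some xc =>
      have hxc : x ≠ xc := by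
        intro e
        subst e
        exact hac (fmap_inj h𝔾 hℍ hfa hfc)
      have hAB := close_fwd h𝔾 hℍ (Or.inl hfa) hadj hfc hxc
      have hfr : ∀ z ∈ w₂.support, fmap 𝔾 ℍ z = some xc → z = c :=
        fun z hz hfz => fmap_inj h𝔾 hℍ hfz hfc
      obtain ⟨w', hw'⟩ := aux_fwd h𝔾 hℍ hfb w₂ hp₂ hint xc (Or.inl hfc) hfr
      refine ⟨SimpleGraph.Walk.cons hAB w', ?_⟩
      intro z hz h1 h2
      rw [SimpleGraph.Walk.support_cons] at hz
      rcases List.mem_cons.1 hz with rfl | hz'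
      · exact absurd rfl h1
      · by_cases hzc : z = xc
        · subst hzc
          by_cases hcb : c = b
          · subst hcb
            rw [hfb] at hfc
            exact absurd (Option.some.inj hfc).symm h2
          · rw [comp_iota_fmap h𝔾 hℍ hfc]
            exact hw2 c (by rw [SimpleGraph.Walk.support_cons]; exact List.mem_cons_of_mem _ hcmem) hac.symm hcb
        · exact hw' z hz' hzc h2

end Aux6

end BIGraph

namespace BIGraph

section Aux7

variable {r : ℕ} {α β : Type*}

/-- `Sum.inl` as a graph homomorphism `𝔾 → 𝔾·ℍ`. -/
def gHom (𝔾 : BIGraph r α) (ℍ : BIGraph r β) : 𝔾.graph →g (𝔾.comp ℍ).graph where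
  toFun := Sum.inl
  map_rel' := fun h => comp_adj_inl_inl.2 ⟨h.ne, Or.inl h⟩

/-- Endpoint data for expanding an `ℍ`-segment into a walk of `𝔾·ℍ`. -/
def endRep (𝔾 : BIGraph r α) (ℍ : BIGraph r β) (a : α ⊕ β) (v : β) : Prop :=
  (a = Sum.inr v ∧ ¬ Merged 𝔾 ℍ v) ∨ (∃ u, a = Sum.inl u ∧ Ident 𝔾 ℍ u v)

lemma iota_ne {𝔾 : BIGraph r α} {v₁ v₂ : α} {q q' : Fin r × Mark}
    (h1 : 𝔾.iota v₁ = some q) (h2 : 𝔾.iota v₂ = some q') (h : q ≠ q') : v₁ ≠ v₂ :=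
  fun e => h (Option.some.inj ((e ▸ h1).symm.trans h2))

lemma endRep_adj {𝔾 : BIGraph r α} {ℍ : BIGraph r β} (hℍ : ℍ.Valid)
    {a c : α ⊕ β} {v v' : β} (ha : endRep 𝔾 ℍ a v) (hc : endRep 𝔾 ℍ c v')
    (hvv : ℍ.graph.Adj v v') : (𝔾.comp ℍ).graph.Adj a c := by
  rcases ha with ⟨rfl, hnm⟩ | ⟨u, rfl, hid⟩ <;>
    rcases hc with ⟨rfl, hnm'⟩ | ⟨u', rfl, hid'⟩
  · exact comp_adj_inr_inr.2 ⟨hnm, hnm', hvv⟩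
  · exact comp_adj_inr_inl.2 ⟨hnm, v', hvv.symm, hid'⟩
  · exact comp_adj_inl_inr.2 ⟨hnm', v, hvv, hid⟩
  · refine comp_adj_inl_inl.2 ⟨?_, Or.inr ⟨v, v', hvv, hid, hid'⟩⟩
    intro e
    subst e
    obtain ⟨k, hr1, hl1⟩ := hid
    obtain ⟨k', hr2, hl2⟩ := hid'
    rw [hr1] at hr2
    cases Option.some.inj hr2
    exact hvv.ne (hℍ.1 v v' k hl1 hl2)

lemma hwalk_bwd {𝔾 : BIGraph r α} {ℍ : BIGraph r β} (hℍ : ℍ.Valid)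
    {v v' : β} (w : ℍ.graph.Walk v v') :
    w.IsPath → (∀ z ∈ w.support, z ≠ v → z ≠ v' → ℍ.iota z = none) →
    ∀ a c : α ⊕ β, endRep 𝔾 ℍ a v → endRep 𝔾 ℍ c v' → v ≠ v' →
    ∃ wj : (𝔾.comp ℍ).graph.Walk a c,
      ∀ t ∈ wj.support, t ≠ a → t ≠ c → (𝔾.comp ℍ).iota t = none := by
  induction w with
  | nil =>
    intro _ _ a c _ _ hne
    exact absurd rfl hne
  | @cons v v₁ v'' hadj w₂ ih =>
    intro hp hint a c ha hc hne
    rw [SimpleGraph.Walk.cons_isPath_iff] at hp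
    obtain ⟨hp₂, hvnotin⟩ := hp
    by_cases hv₁ : v₁ = v''
    · subst hv₁
      refine ⟨SimpleGraph.Walk.cons (endRep_adj hℍ ha hc hadj)
        SimpleGraph.Walk.nil, ?_⟩
      intro t ht h1 h2
      simp only [SimpleGraph.Walk.support_cons, SimpleGraph.Walk.support_nil,
        List.mem_cons, List.mem_singleton] at ht
      rcases ht with rfl | rfl | h3
      · exact absurd rfl h1
      · exact absurd rfl h2
      · cases h3
    · have hv₁mem : v₁ ∈ w₂.support := SimpleGraph.Walk.start_mem_support w₂
      have hn₁ : ℍ.iota v₁ = none := by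
        refine hint v₁ (by rw [SimpleGraph.Walk.support_cons]; exact List.mem_cons_of_mem _ hv₁mem) (Ne.symm hadj.ne) hv₁
      have hrep₁ : endRep 𝔾 ℍ (Sum.inr v₁ : α ⊕ β) v₁ :=
        Or.inl ⟨rfl, not_merged_of_iota_none hn₁⟩
      have hedge : (𝔾.comp ℍ).graph.Adj a (Sum.inr v₁) := endRep_adj hℍ ha hrep₁ hadj
      have hint' : ∀ z ∈ w₂.support, z ≠ v₁ → z ≠ v'' → ℍ.iota z = none := by
        intro z hz h1 h2
        exact hint z (by rw [SimpleGraph.Walk.support_cons]; exact List.mem_cons_of_mem _ hz) (fun e => hvnotin (e ▸ hz)) h2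
      obtain ⟨wj₂, hwj₂⟩ := ih hp₂ hint' (Sum.inr v₁) c hrep₁ hc hv₁
      refine ⟨SimpleGraph.Walk.cons hedge wj₂, ?_⟩
      intro t ht h1 h2
      rw [SimpleGraph.Walk.support_cons] at ht
      rcases List.mem_cons.1 ht with rfl | ht'
      · exact absurd rfl h1
      · by_cases htv : t = Sum.inr v₁
        · subst htv
          exact comp_iota_inr_none hn₁
        · exact hwj₂ t ht' htv h2

/-- Expanding one edge of `⌈𝔾⌉·⌈ℍ⌉` into a walk of `𝔾·ℍ`. -/
lemma edge_bwd {𝔾 : BIGraph r α} {ℍ : BIGraph r β} (h𝔾 : 𝔾.Valid) (hℍ : ℍ.Valid)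
    {x z : (Fin r × Mark) ⊕ (Fin r × Mark)} {a c : α ⊕ β}
    (h : ((𝔾.abstr).comp (ℍ.abstr)).graph.Adj x z)
    (ha : fmap 𝔾 ℍ a = some x) (hc : fmap 𝔾 ℍ c = some z) :
    ∃ wj : (𝔾.comp ℍ).graph.Walk a c,
      ∀ t ∈ wj.support, t ≠ a → t ≠ c → (𝔾.comp ℍ).iota t = none := by
  classical
  rcases a with u | v <;> rcases c with u' | v'
  · obtain ⟨p, hpu, rfl⟩ := Option.map_eq_some_iff.1 ha
    obtain ⟨p', hpu', rfl⟩ := Option.map_eq_some_iff.1 hc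
    obtain ⟨hne, hA | ⟨q, q', hBadj, hidAB, hidAB'⟩⟩ := comp_adj_inl_inl.1 h
    · obtain ⟨-, u₁, u₂, hu₁, hu₂, wg, hwg⟩ := (abstr_adj _).1 hA
      cases iota_inj h𝔾 hu₁ hpu
      cases iota_inj h𝔾 hu₂ hpu'
      refine ⟨wg.map (gHom 𝔾 ℍ), ?_⟩
      intro t ht h1 h2
      replace ht : t ∈ wg.support.map (gHom 𝔾 ℍ) := by
        rw [← SimpleGraph.Walk.support_map]; exact ht
      rw [List.mem_map] at ht
      obtain ⟨z₀, hz₀, rfl⟩ := ht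
      exact comp_iota_inl_none hℍ
        (hwg z₀ hz₀ (fun e => h1 (congrArg Sum.inl e)) (fun e => h2 (congrArg Sum.inl e)))
    · obtain ⟨hneq, v₁, v₂, hv₁, hv₂, whh, hwh⟩ := (abstr_adj _).1 hBadj
      have hid₁ : Ident 𝔾 ℍ u v₁ := ident_of_abstr h𝔾 hpu hv₁ hidAB
      have hid₂ : Ident 𝔾 ℍ u' v₂ := ident_of_abstr h𝔾 hpu' hv₂ hidAB'
      have hv₁v₂ : v₁ ≠ v₂ := iota_ne hv₁ hv₂ hneq
      refine hwalk_bwd hℍ whh.bypass whh.bypass_isPath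
        (fun z hz => hwh z (whh.support_bypass_subset hz)) _ _
        (Or.inr ⟨u, rfl, hid₁⟩) (Or.inr ⟨u', rfl, hid₂⟩) hv₁v₂
  · obtain ⟨p, hpu, rfl⟩ := Option.map_eq_some_iff.1 ha
    obtain ⟨q', hqv', rfl⟩ := Option.map_eq_some_iff.1 hc
    obtain ⟨hnmAB, q, hBadj, hidAB⟩ := comp_adj_inl_inr.1 h
    obtain ⟨hneq, v₁, v₂, hv₁, hv₂, whh, hwh⟩ := (abstr_adj _).1 hBadj
    cases iota_inj hℍ hv₂ hqv'
    have hid₁ : Ident 𝔾 ℍ u v₁ := ident_of_abstr h𝔾 hpu hv₁ hidAB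
    have hv₁v' : v₁ ≠ v' := iota_ne hv₁ hqv' hneq
    refine hwalk_bwd hℍ whh.bypass whh.bypass_isPath
      (fun z hz => hwh z (whh.support_bypass_subset hz)) _ _
      (Or.inr ⟨u, rfl, hid₁⟩)
      (Or.inl ⟨rfl, fun hm => hnmAB ((merged_match h𝔾 hℍ hqv').1 hm)⟩) hv₁v'
  · obtain ⟨q, hqv, rfl⟩ := Option.map_eq_some_iff.1 ha
    obtain ⟨p', hpu', rfl⟩ := Option.map_eq_some_iff.1 hc
    obtain ⟨hnmAB, q', hBadj, hidAB⟩ := comp_adj_inr_inl.1 h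
    obtain ⟨hneq, v₁, v₂, hv₁, hv₂, whh, hwh⟩ := (abstr_adj _).1 hBadj
    cases iota_inj hℍ hv₂ hqv
    have hid₁ : Ident 𝔾 ℍ u' v₁ := ident_of_abstr h𝔾 hpu' hv₁ hidAB
    have hv₁v : v₁ ≠ v := iota_ne hv₁ hqv hneq
    obtain ⟨wj, hwj⟩ := hwalk_bwd hℍ whh.bypass whh.bypass_isPath
      (fun z hz => hwh z (whh.support_bypass_subset hz)) (Sum.inl u') (Sum.inr v)
      (Or.inr ⟨u', rfl, hid₁⟩)
      (Or.inl ⟨rfl, fun hm => hnmAB ((merged_match h𝔾 hℍ hqv).1 hm)⟩) hv₁v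
    refine ⟨wj.reverse, ?_⟩
    intro t ht h1 h2
    rw [SimpleGraph.Walk.support_reverse, List.mem_reverse] at ht
    exact hwj t ht h2 h1
  · obtain ⟨q, hqv, rfl⟩ := Option.map_eq_some_iff.1 ha
    obtain ⟨q', hqv', rfl⟩ := Option.map_eq_some_iff.1 hc
    obtain ⟨hnm, hnm', hBadj⟩ := comp_adj_inr_inr.1 h
    obtain ⟨hneq, v₁, v₂, hv₁, hv₂, whh, hwh⟩ := (abstr_adj _).1 hBadj
    cases iota_inj hℍ hv₁ hqv
    cases iota_inj hℍ hv₂ hqv'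
    have hvv' : v ≠ v' := iota_ne hqv hqv' hneq
    exact hwalk_bwd hℍ whh.bypass whh.bypass_isPath
      (fun z hz => hwh z (whh.support_bypass_subset hz)) _ _
      (Or.inl ⟨rfl, fun hm => hnm ((merged_match h𝔾 hℍ hqv).1 hm)⟩)
      (Or.inl ⟨rfl, fun hm => hnm' ((merged_match h𝔾 hℍ hqv').1 hm)⟩) hvv'

/-- Any endpoint of an edge of `⌈𝔾⌉·⌈ℍ⌉` has an `fmap`-preimage. -/
lemma fmap_preimage_of_adj {𝔾 : BIGraph r α} {ℍ : BIGraph r β} (h𝔾 : 𝔾.Valid) (hℍ : ℍ.Valid)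
    {x z : (Fin r × Mark) ⊕ (Fin r × Mark)}
    (h : ((𝔾.abstr).comp (ℍ.abstr)).graph.Adj x z) :
    ∃ c, fmap 𝔾 ℍ c = some z := by
  have hVG : ∀ p' : Fin r × Mark, (∃ u, 𝔾.iota u = some p') →
      ∃ c, fmap 𝔾 ℍ c = some (Sum.inl p') := by
    rintro p' ⟨u, hu⟩
    exact ⟨Sum.inl u, by rw [fmap_inl, hu]; rfl⟩
  have hVH : ∀ q' : Fin r × Mark, (∃ v, ℍ.iota v = some q') →
      ∃ c, fmap 𝔾 ℍ c = some (Sum.inr q') := by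
    rintro q' ⟨v, hv⟩
    exact ⟨Sum.inr v, by rw [fmap_inr, hv]; rfl⟩
  rcases x with p | q <;> rcases z with p' | q'
  · obtain ⟨-, hA | ⟨q, q', hBadj, -, hidAB'⟩⟩ := comp_adj_inl_inl.1 h
    · obtain ⟨-, u₁, u₂, -, hu₂, -⟩ := (abstr_adj _).1 hA
      exact hVG p' ⟨u₂, hu₂⟩
    · obtain ⟨k, hr, -⟩ := hidAB'
      rw [abstr_right_eq h𝔾] at hr
      split_ifs at hr with h1
      exact hVG p' h1.2
  · obtain ⟨-, q, hBadj, -⟩ := comp_adj_inl_inr.1 h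
    obtain ⟨-, v₁, v₂, -, hv₂, -⟩ := (abstr_adj _).1 hBadj
    exact hVH q' ⟨v₂, hv₂⟩
  · obtain ⟨-, q₀, hBadj, hidAB⟩ := comp_adj_inr_inl.1 h
    obtain ⟨k, hr, -⟩ := hidAB
    rw [abstr_right_eq h𝔾] at hr
    split_ifs at hr with h1
    exact hVG p' h1.2
  · obtain ⟨-, -, hBadj⟩ := comp_adj_inr_inr.1 h
    obtain ⟨-, v₁, v₂, -, hv₂, -⟩ := (abstr_adj _).1 hBadj
    exact hVH q' ⟨v₂, hv₂⟩

lemma aux_bwd {𝔾 : BIGraph r α} {ℍ : BIGraph r β} (h𝔾 : 𝔾.Valid) (hℍ : ℍ.Valid)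
    {b : α ⊕ β} {y : (Fin r × Mark) ⊕ (Fin r × Mark)} (hb : fmap 𝔾 ℍ b = some y)
    {x : (Fin r × Mark) ⊕ (Fin r × Mark)}
    (w' : ((𝔾.abstr).comp (ℍ.abstr)).graph.Walk x y) :
    w'.IsPath →
    (∀ z ∈ w'.support, z ≠ x → z ≠ y →
      ((𝔾.abstr).comp (ℍ.abstr)).iota z = none) →
    ∀ a : α ⊕ β, fmap 𝔾 ℍ a = some x →
    ∃ wj : (𝔾.comp ℍ).graph.Walk a b,
      ∀ t ∈ wj.support, t ≠ a → t ≠ b → (𝔾.comp ℍ).iota t = none := by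
  induction w' with
  | nil =>
    intro _ _ a ha
    cases fmap_inj h𝔾 hℍ ha hb
    refine ⟨SimpleGraph.Walk.nil, ?_⟩
    intro t ht h1 _
    simp only [SimpleGraph.Walk.support_nil, List.mem_singleton] at ht
    exact absurd ht h1
  | @cons x z y hadj w₂ ih =>
    intro hp hint a ha
    rw [SimpleGraph.Walk.cons_isPath_iff] at hp
    obtain ⟨hp₂, hxnotin⟩ := hp
    have hzmem : z ∈ w₂.support := SimpleGraph.Walk.start_mem_support w₂
    obtain ⟨c, hcz⟩ := fmap_preimage_of_adj h𝔾 hℍ hadj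
    obtain ⟨wseg, hwseg⟩ := edge_bwd h𝔾 hℍ hadj ha hcz
    have hint' : ∀ z' ∈ w₂.support, z' ≠ z → z' ≠ y →
        ((𝔾.abstr).comp (ℍ.abstr)).iota z' = none := by
      intro z' hz' h1 h2
      exact hint z' (by rw [SimpleGraph.Walk.support_cons]; exact List.mem_cons_of_mem _ hz') (fun e => hxnotin (e ▸ hz')) h2
    obtain ⟨wj₂, hwj₂⟩ := ih hb hp₂ hint' c hcz
    refine ⟨wseg.append wj₂, ?_⟩
    have hciota : c ≠ b → (𝔾.comp ℍ).iota c = none := by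
      intro hcb
      have hzy : z ≠ y := by
        intro e
        subst e
        exact hcb (fmap_inj h𝔾 hℍ hcz hb)
      rw [← comp_iota_fmap h𝔾 hℍ hcz]
      exact hint z (by rw [SimpleGraph.Walk.support_cons]; exact List.mem_cons_of_mem _ hzmem) (fun e => hxnotin (e ▸ hzmem)) hzy
    intro t ht h1 h2
    rw [SimpleGraph.Walk.support_append, List.mem_append] at ht
    rcases ht with ht | ht
    · by_cases htc : t = c
      · subst htc
        exact hciota h2
      · exact hwseg t ht h1 htc
    · by_cases htc : t = c
      · subst htc
        exact hciota h2
      · exact hwj₂ t (List.mem_of_mem_tail ht) htc h2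

lemma fmap_preimage_of_ab_iota {𝔾 : BIGraph r α} {ℍ : BIGraph r β}
    (h𝔾 : 𝔾.Valid) (hℍ : ℍ.Valid) {x : (Fin r × Mark) ⊕ (Fin r × Mark)} {p : Fin r × Mark}
    (hx : ((𝔾.abstr).comp (ℍ.abstr)).iota x = some p) :
    ∃ a, fmap 𝔾 ℍ a = some x ∧ (𝔾.comp ℍ).iota a = some p := by
  rcases x with p' | q'
  · obtain ⟨p'', hp''⟩ := comp_iota_inl_some (valid_abstr hℍ) hx
    obtain ⟨u, hu⟩ := abstr_iota_some h𝔾 hp''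
    refine ⟨Sum.inl u, by rw [fmap_inl, hu]; rfl, ?_⟩
    rw [comp_iota_inl_match h𝔾 hℍ hu]
    exact hx
  · obtain ⟨q'', hq''⟩ := comp_iota_inr_some hx
    obtain ⟨v, hv⟩ := abstr_iota_some hℍ hq''
    refine ⟨Sum.inr v, by rw [fmap_inr, hv]; rfl, ?_⟩
    rw [comp_iota_inr_match h𝔾 hℍ hv]
    exact hx

lemma adj_bwd {𝔾 : BIGraph r α} {ℍ : BIGraph r β} (h𝔾 : 𝔾.Valid) (hℍ : ℍ.Valid)
    {p q : Fin r × Mark} (h : ((((𝔾.abstr).comp (ℍ.abstr))).abstr).graph.Adj p q) :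
    ((𝔾.comp ℍ).abstr).graph.Adj p q := by
  classical
  obtain ⟨hpq, x, y, hx, hy, w', hw'⟩ := (abstr_adj _).1 h
  obtain ⟨a, hfa, hap⟩ := fmap_preimage_of_ab_iota h𝔾 hℍ hx
  obtain ⟨b, hfb, hbq⟩ := fmap_preimage_of_ab_iota h𝔾 hℍ hy
  obtain ⟨wj, hwj⟩ := aux_bwd h𝔾 hℍ hfb w'.bypass w'.bypass_isPath
    (fun z hz => hw' z (w'.support_bypass_subset hz)) a hfa
  exact (abstr_adj _).2 ⟨hpq, a, b, hap, hbq, wj, hwj⟩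

end Aux7

end BIGraph

namespace BIGraph

lemma bigraph_ext {r : ℕ} {α : Type*} {G H : BIGraph r α}
    (h1 : G.graph = H.graph) (h2 : G.left = H.left) (h3 : G.right = H.right) : G = H := by
  cases G
  cases H
  simp_all

end BIGraph

/-- For valid bi-interface graphs of arity `r`, abstraction commutes
with composition: `⌈𝔾·ℍ⌉ = ⌈⌈𝔾⌉·⌈ℍ⌉⌉`. Hence abstraction is a semigroup homomorphism
onto basic bi-interface graphs equipped with `𝔸 ⊙ 𝔹 = ⌈𝔸·𝔹⌉`. -/
theorem stmt17 {r : ℕ} {α β : Type*} (𝔾 : BIGraph r α) (ℍ : BIGraph r β)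
    (h𝔾 : 𝔾.Valid) (hℍ : ℍ.Valid) :
    (𝔾.comp ℍ).abstr = ((𝔾.abstr).comp (ℍ.abstr)).abstr := by
  refine BIGraph.bigraph_ext ?_ (BIGraph.final_left h𝔾 hℍ) (BIGraph.final_right h𝔾 hℍ)
  refine SimpleGraph.ext ?_
  funext p q
  exact propext ⟨BIGraph.adj_fwd h𝔾 hℍ, BIGraph.adj_bwd h𝔾 hℍ⟩
end
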